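/- arXiv:1907.04019 — 6 statements merged into one kernel-verified Lean document; each statement's English description precedes it below -/
import Mathlib

section
/- Fix an integer n ≥ 3 and r₀ > 0. Let û, v̂, ŵ be C² functions on (r₀,∞) such that û(r), v̂(r), ŵ(r) are O(r^{−n}), their first derivatives are O(r^{−n−1}), and their second derivatives are O(r^{−n−2}) as r → ∞. Then, as r → ∞, R[u_{HM,r₀}+û, v_{HM,r₀}+v̂, w_{HM,r₀}+ŵ](r) = −n(n−1) + 2 r^{1−n} d/dr[ (n−1) rⁿ û(r) − r^{n+1} v̂′(r) − (n−2) r^{n+1} ŵ′(r) ] + O(r^{−2n}). -/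
open Filter

/-- The scalar curvature `R[u,v,w]` of the diagonal metric
`e^{2u} dr² + e^{2v} dθ² + e^{2w}((dx³)² + ⋯ + (dxⁿ)²)`. -/
noncomputable def Rop (n : ℕ) (u v w : ℝ → ℝ) (r : ℝ) : ℝ :=
  2 * Real.exp (-2 * u r) *
    (-(deriv (deriv v) r) - ((n : ℝ) - 2) * deriv (deriv w) r +
      deriv u r * deriv v r + ((n : ℝ) - 2) * deriv u r * deriv w r -
      ((n : ℝ) - 2) * deriv v r * deriv w r - (deriv v r) ^ 2 -
      ((n : ℝ) - 1) * ((n : ℝ) - 2) / 2 * (deriv w r) ^ 2)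

/-- The Horowitz–Myers profile function `u_{HM,r₀}` (with `ℓ = 1`). -/
noncomputable def uHM (n : ℕ) (r₀ r : ℝ) : ℝ :=
  -Real.log r - (1 / 2) * Real.log (1 - (r₀ / r) ^ n)

/-- The Horowitz–Myers profile function `v_{HM,r₀}` (with `ℓ = 1`). -/
noncomputable def vHM (n : ℕ) (r₀ r : ℝ) : ℝ :=
  Real.log r + (1 / 2) * Real.log (1 - (r₀ / r) ^ n)

/-- The Horowitz–Myers profile function `w_{HM}` (with `ℓ = 1`). -/
noncomputable def wHM (r : ℝ) : ℝ := Real.log r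

section AuxLemmas

lemma hasDerivAt_ratpow (n : ℕ) (hn : 1 ≤ n) (r₀ : ℝ) {r : ℝ} (hr : r ≠ 0) :
    HasDerivAt (fun s : ℝ => (r₀ / s) ^ n) (-((n : ℝ) * (r₀ / r) ^ n / r)) r := by
  obtain ⟨m, rfl⟩ : ∃ m, n = m + 1 := ⟨n - 1, by omega⟩
  have h2 := ((hasDerivAt_inv hr).const_mul r₀).pow (m + 1)
  simp only [div_eq_mul_inv]
  refine h2.congr_deriv ?_
  simp only [Nat.add_sub_cancel]
  rw [pow_succ]
  field_simp
  have hrr : r * (r₀ / r) = r₀ := by field_simp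
  rw [pow_succ, mul_left_comm, hrr]
  ring

lemma one_sub_ratpow_pos {n : ℕ} (hn : 1 ≤ n) {r₀ r : ℝ} (hr₀ : 0 < r₀) (hr : r₀ < r) :
    0 < 1 - (r₀ / r) ^ n := by
  have hr0 : 0 < r := hr₀.trans hr
  have h1 : (r₀ / r) ^ n < 1 :=
    pow_lt_one₀ (by positivity) ((div_lt_one hr0).2 hr) (by omega)
  linarith

lemma hasDerivAt_uHM {n : ℕ} (hn : 1 ≤ n) {r₀ r : ℝ} (hr₀ : 0 < r₀) (hr : r₀ < r) :
    HasDerivAt (uHM n r₀)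
      (-r⁻¹ - (n : ℝ) * (r₀ / r) ^ n / (2 * r * (1 - (r₀ / r) ^ n))) r := by
  have hr0 : 0 < r := hr₀.trans hr
  have hf : 0 < 1 - (r₀ / r) ^ n := one_sub_ratpow_pos hn hr₀ hr
  have hF : HasDerivAt (fun s : ℝ => 1 - (r₀ / s) ^ n) ((n : ℝ) * (r₀ / r) ^ n / r) r := by
    simpa using (hasDerivAt_ratpow n hn r₀ hr0.ne').const_sub 1
  have hlog : HasDerivAt (fun s : ℝ => Real.log (1 - (r₀ / s) ^ n))
      ((n : ℝ) * (r₀ / r) ^ n / r / (1 - (r₀ / r) ^ n)) r := hF.log hf.ne'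
  have h := ((Real.hasDerivAt_log hr0.ne').neg).sub (hlog.const_mul (1 / 2 : ℝ))
  refine h.congr_deriv ?_
  set p := (r₀ / r) ^ n with hp
  field_simp

lemma hasDerivAt_DU {n : ℕ} (hn : 1 ≤ n) {r₀ r : ℝ} (hr₀ : 0 < r₀) (hr : r₀ < r) :
    HasDerivAt (fun s : ℝ => -s⁻¹ - (n : ℝ) * (r₀ / s) ^ n / (2 * s * (1 - (r₀ / s) ^ n)))
      (r⁻¹ ^ 2 + (n : ℝ) * (r₀ / r) ^ n * ((n : ℝ) + 1 - (r₀ / r) ^ n) /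
        (2 * r ^ 2 * (1 - (r₀ / r) ^ n) ^ 2)) r := by
  have hr0 : 0 < r := hr₀.trans hr
  have hf : 0 < 1 - (r₀ / r) ^ n := one_sub_ratpow_pos hn hr₀ hr
  have hF : HasDerivAt (fun s : ℝ => 1 - (r₀ / s) ^ n) ((n : ℝ) * (r₀ / r) ^ n / r) r := by
    simpa using (hasDerivAt_ratpow n hn r₀ hr0.ne').const_sub 1
  have hnum : HasDerivAt (fun s : ℝ => (n : ℝ) * (r₀ / s) ^ n)
      ((n : ℝ) * -((n : ℝ) * (r₀ / r) ^ n / r)) r :=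
    (hasDerivAt_ratpow n hn r₀ hr0.ne').const_mul _
  have hden : HasDerivAt (fun s : ℝ => 2 * s * (1 - (r₀ / s) ^ n))
      (2 * 1 * (1 - (r₀ / r) ^ n) + 2 * r * ((n : ℝ) * (r₀ / r) ^ n / r)) r :=
    (((hasDerivAt_id r).const_mul 2).mul hF)
  have hdne : 2 * r * (1 - (r₀ / r) ^ n) ≠ 0 := by positivity
  have hdiv := hnum.div hden hdne
  have h := (hasDerivAt_inv hr0.ne').neg.sub hdiv
  refine h.congr_deriv ?_
  set p := (r₀ / r) ^ n with hp
  field_simp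
  ring

lemma hasDerivAt_vHM {n : ℕ} (hn : 1 ≤ n) {r₀ r : ℝ} (hr₀ : 0 < r₀) (hr : r₀ < r) :
    HasDerivAt (vHM n r₀)
      (-(-r⁻¹ - (n : ℝ) * (r₀ / r) ^ n / (2 * r * (1 - (r₀ / r) ^ n)))) r := by
  have h := (hasDerivAt_uHM hn hr₀ hr).neg
  apply h.congr_of_eventuallyEq
  filter_upwards with s
  simp only [vHM, uHM, Pi.neg_apply]
  ring

lemma hasDerivAt_DV {n : ℕ} (hn : 1 ≤ n) {r₀ r : ℝ} (hr₀ : 0 < r₀) (hr : r₀ < r) :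
    HasDerivAt (fun s : ℝ =>
        -(-s⁻¹ - (n : ℝ) * (r₀ / s) ^ n / (2 * s * (1 - (r₀ / s) ^ n))))
      (-(r⁻¹ ^ 2 + (n : ℝ) * (r₀ / r) ^ n * ((n : ℝ) + 1 - (r₀ / r) ^ n) /
        (2 * r ^ 2 * (1 - (r₀ / r) ^ n) ^ 2))) r :=
  (hasDerivAt_DU hn hr₀ hr).neg

/-- Auxiliary: the "linear" part of the expansion. -/
noncomputable def auxT1 (n : ℕ) (uh vh wh : ℝ → ℝ) (r : ℝ) : ℝ :=
  2 * (((n : ℝ) - 1) * (r * deriv uh r) - ((n : ℝ) + 1) * (r * deriv vh r) -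
    r ^ 2 * deriv (deriv vh) r - ((n : ℝ) - 2) * ((n : ℝ) + 1) * (r * deriv wh r) -
    ((n : ℝ) - 2) * (r ^ 2 * deriv (deriv wh) r))

/-- Auxiliary: the "remainder" part of the expansion. -/
noncomputable def auxM (n : ℕ) (r₀ : ℝ) (uh vh wh : ℝ → ℝ) (r : ℝ) : ℝ :=
  (r₀ / r) ^ n *
      ((2 - (n : ℝ)) * (r * deriv uh r + r * deriv vh r) +
        2 * ((n : ℝ) - 2) * (r * deriv wh r) + 2 * (r ^ 2 * deriv (deriv vh) r) +
        2 * ((n : ℝ) - 2) * (r ^ 2 * deriv (deriv wh) r)) +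
    (1 - (r₀ / r) ^ n) *
      (2 * ((r * deriv uh r) * (r * deriv vh r) +
        ((n : ℝ) - 2) * ((r * deriv uh r) * (r * deriv wh r)) -
        ((n : ℝ) - 2) * ((r * deriv vh r) * (r * deriv wh r)) -
        (r * deriv vh r) * (r * deriv vh r) -
        ((n : ℝ) - 1) * ((n : ℝ) - 2) / 2 * ((r * deriv wh r) * (r * deriv wh r))))

end AuxLemmas

/-- Expansion of the scalar curvature of a perturbed Horowitz–Myers metric:
`R[u_{HM}+û, v_{HM}+v̂, w_{HM}+ŵ](r)
  = -n(n-1) + 2 r^{1-n} d/dr[(n-1) rⁿ û - r^{n+1} v̂' - (n-2) r^{n+1} ŵ'] + O(r^{-2n})`. -/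
theorem stmt_6 (n : ℕ) (hn : 3 ≤ n) (r₀ : ℝ) (hr₀ : 0 < r₀) (uh vh wh : ℝ → ℝ)
    (hu : ContDiffOn ℝ 2 uh (Set.Ioi r₀)) (hv : ContDiffOn ℝ 2 vh (Set.Ioi r₀))
    (hw : ContDiffOn ℝ 2 wh (Set.Ioi r₀))
    (hu0 : uh =O[atTop] fun r => r ^ (-(n : ℝ)))
    (hv0 : vh =O[atTop] fun r => r ^ (-(n : ℝ)))
    (hw0 : wh =O[atTop] fun r => r ^ (-(n : ℝ)))
    (hu1 : deriv uh =O[atTop] fun r => r ^ (-(n : ℝ) - 1))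
    (hv1 : deriv vh =O[atTop] fun r => r ^ (-(n : ℝ) - 1))
    (hw1 : deriv wh =O[atTop] fun r => r ^ (-(n : ℝ) - 1))
    (hu2 : deriv (deriv uh) =O[atTop] fun r => r ^ (-(n : ℝ) - 2))
    (hv2 : deriv (deriv vh) =O[atTop] fun r => r ^ (-(n : ℝ) - 2))
    (hw2 : deriv (deriv wh) =O[atTop] fun r => r ^ (-(n : ℝ) - 2)) :
    (fun r : ℝ =>
        Rop n (fun s => uHM n r₀ s + uh s) (fun s => vHM n r₀ s + vh s)
            (fun s => wHM s + wh s) r -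
          (-(n : ℝ) * ((n : ℝ) - 1) +
            2 * r ^ (1 - (n : ℝ)) *
              deriv (fun s => ((n : ℝ) - 1) * s ^ n * uh s - s ^ (n + 1) * deriv vh s -
                ((n : ℝ) - 2) * s ^ (n + 1) * deriv wh s) r))
      =O[atTop] fun r => r ^ (-2 * (n : ℝ)) := by
  have hn1 : 1 ≤ n := by omega
  -- differentiability of the perturbations and their derivatives
  have hudiff : ∀ s ∈ Set.Ioi r₀, DifferentiableAt ℝ uh s := fun s hs =>
    (hu.contDiffAt (isOpen_Ioi.mem_nhds hs)).differentiableAt (by norm_num)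
  have hvdiff : ∀ s ∈ Set.Ioi r₀, DifferentiableAt ℝ vh s := fun s hs =>
    (hv.contDiffAt (isOpen_Ioi.mem_nhds hs)).differentiableAt (by norm_num)
  have hwdiff : ∀ s ∈ Set.Ioi r₀, DifferentiableAt ℝ wh s := fun s hs =>
    (hw.contDiffAt (isOpen_Ioi.mem_nhds hs)).differentiableAt (by norm_num)
  have hu' : ContDiffOn ℝ 1 (deriv uh) (Set.Ioi r₀) :=
    hu.deriv_of_isOpen isOpen_Ioi (by norm_num)
  have hu1d : ∀ s ∈ Set.Ioi r₀, DifferentiableAt ℝ (deriv uh) s := fun s hs =>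
    (hu'.contDiffAt (isOpen_Ioi.mem_nhds hs)).differentiableAt (by norm_num)
  have hv' : ContDiffOn ℝ 1 (deriv vh) (Set.Ioi r₀) :=
    hv.deriv_of_isOpen isOpen_Ioi (by norm_num)
  have hv1d : ∀ s ∈ Set.Ioi r₀, DifferentiableAt ℝ (deriv vh) s := fun s hs =>
    (hv'.contDiffAt (isOpen_Ioi.mem_nhds hs)).differentiableAt (by norm_num)
  have hw' : ContDiffOn ℝ 1 (deriv wh) (Set.Ioi r₀) :=
    hw.deriv_of_isOpen isOpen_Ioi (by norm_num)
  have hw1d : ∀ s ∈ Set.Ioi r₀, DifferentiableAt ℝ (deriv wh) s := fun s hs =>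
    (hw'.contDiffAt (isOpen_Ioi.mem_nhds hs)).differentiableAt (by norm_num)
  -- the key pointwise identity
  have key : ∀ᶠ r in atTop,
      Rop n (fun s => uHM n r₀ s + uh s) (fun s => vHM n r₀ s + vh s)
            (fun s => wHM s + wh s) r -
          (-(n : ℝ) * ((n : ℝ) - 1) +
            2 * r ^ (1 - (n : ℝ)) *
              deriv (fun s => ((n : ℝ) - 1) * s ^ n * uh s - s ^ (n + 1) * deriv vh s -
                ((n : ℝ) - 2) * s ^ (n + 1) * deriv wh s) r) =
        (Real.exp (-2 * uh r) - 1) * (auxT1 n uh vh wh r + auxM n r₀ uh vh wh r) -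
          (n : ℝ) * ((n : ℝ) - 1) * (Real.exp (-2 * uh r) - 1 + 2 * uh r) +
          auxM n r₀ uh vh wh r := by
    filter_upwards [eventually_gt_atTop r₀] with r hr
    have hr0 : 0 < r := hr₀.trans hr
    have hf : 0 < 1 - (r₀ / r) ^ n := one_sub_ratpow_pos hn1 hr₀ hr
    have memnhds : Set.Ioi r₀ ∈ nhds r := isOpen_Ioi.mem_nhds hr
    -- first derivatives
    have dU1 : deriv (fun s => uHM n r₀ s + uh s) r =
        (-r⁻¹ - (n : ℝ) * (r₀ / r) ^ n / (2 * r * (1 - (r₀ / r) ^ n))) + deriv uh r :=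
      ((hasDerivAt_uHM hn1 hr₀ hr).add ((hudiff r hr).hasDerivAt)).deriv
    have dV1 : deriv (fun s => vHM n r₀ s + vh s) r =
        (-(-r⁻¹ - (n : ℝ) * (r₀ / r) ^ n / (2 * r * (1 - (r₀ / r) ^ n)))) + deriv vh r :=
      ((hasDerivAt_vHM hn1 hr₀ hr).add ((hvdiff r hr).hasDerivAt)).deriv
    have dW1 : deriv (fun s => wHM s + wh s) r = r⁻¹ + deriv wh r :=
      ((Real.hasDerivAt_log hr0.ne').add ((hwdiff r hr).hasDerivAt)).deriv
    -- second derivatives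
    have dV2 : deriv (deriv (fun s => vHM n r₀ s + vh s)) r =
        (-(r⁻¹ ^ 2 + (n : ℝ) * (r₀ / r) ^ n * ((n : ℝ) + 1 - (r₀ / r) ^ n) /
          (2 * r ^ 2 * (1 - (r₀ / r) ^ n) ^ 2))) + deriv (deriv vh) r := by
      have hev : deriv (fun s => vHM n r₀ s + vh s) =ᶠ[nhds r]
          fun s => (-(-s⁻¹ - (n : ℝ) * (r₀ / s) ^ n / (2 * s * (1 - (r₀ / s) ^ n)))) +
            deriv vh s := by
        filter_upwards [memnhds] with s hs
        exact ((hasDerivAt_vHM hn1 hr₀ hs).add ((hvdiff s hs).hasDerivAt)).deriv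
      rw [hev.deriv_eq]
      exact ((hasDerivAt_DV hn1 hr₀ hr).add ((hv1d r hr).hasDerivAt)).deriv
    have dW2 : deriv (deriv (fun s => wHM s + wh s)) r =
        (-(r ^ 2)⁻¹) + deriv (deriv wh) r := by
      have hev : deriv (fun s => wHM s + wh s) =ᶠ[nhds r]
          fun s => s⁻¹ + deriv wh s := by
        filter_upwards [memnhds] with s hs
        have hs0 : (0 : ℝ) < s := hr₀.trans hs
        exact ((Real.hasDerivAt_log hs0.ne').add ((hwdiff s hs).hasDerivAt)).deriv
      rw [hev.deriv_eq]
      exact ((hasDerivAt_inv hr0.ne').add ((hw1d r hr).hasDerivAt)).deriv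
    -- derivative of the flux term
    have h1 := ((hasDerivAt_pow n r).const_mul ((n : ℝ) - 1)).mul ((hudiff r hr).hasDerivAt)
    have h2 := (hasDerivAt_pow (n + 1) r).mul ((hv1d r hr).hasDerivAt)
    have h3 := ((hasDerivAt_pow (n + 1) r).const_mul ((n : ℝ) - 2)).mul
      ((hw1d r hr).hasDerivAt)
    have dT : deriv (fun s => ((n : ℝ) - 1) * s ^ n * uh s - s ^ (n + 1) * deriv vh s -
        ((n : ℝ) - 2) * s ^ (n + 1) * deriv wh s) r =
        (((n : ℝ) - 1) * ((n : ℝ) * r ^ (n - 1)) * uh r +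
            ((n : ℝ) - 1) * r ^ n * deriv uh r) -
          (((n : ℝ) + 1) * r ^ (n + 1 - 1) * deriv vh r +
            r ^ (n + 1) * deriv (deriv vh) r) -
          (((n : ℝ) - 2) * (((n : ℝ) + 1) * r ^ (n + 1 - 1)) * deriv wh r +
            ((n : ℝ) - 2) * r ^ (n + 1) * deriv (deriv wh) r) := by
      have h := (h1.sub h2).sub h3
      have hd := h.deriv
      refine hd.trans ?_
      push_cast
      ring
    -- the exponential factor
    have hexp : Real.exp (-2 * (uHM n r₀ r + uh r)) =
        r * r * (1 - (r₀ / r) ^ n) * Real.exp (-2 * uh r) := by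
      have harg : -2 * (uHM n r₀ r + uh r) =
          (Real.log r + Real.log r + Real.log (1 - (r₀ / r) ^ n)) + -2 * uh r := by
        simp only [uHM]; ring
      rw [harg, Real.exp_add, Real.exp_add, Real.exp_add, Real.exp_log hr0,
        Real.exp_log hf]
    -- the rpow factor
    have hy : r ^ (1 - (n : ℝ)) = r * (r ^ n)⁻¹ := by
      rw [show (1 - (n : ℝ)) = 1 + -(n : ℝ) by ring, Real.rpow_add hr0, Real.rpow_one,
        Real.rpow_neg hr0.le, Real.rpow_natCast]
    simp only [Rop]
    rw [dU1, dV1, dW1, dV2, dW2, dT, hexp, hy, auxT1, auxM]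
    obtain ⟨m, rfl⟩ : ∃ m, n = m + 3 := ⟨n - 3, by omega⟩
    simp only [show m + 3 - 1 = m + 2 from rfl, show m + 3 + 1 - 1 = m + 3 from rfl,
      show m + 3 + 1 = m + 4 from rfl]
    have hrne : r ≠ 0 := hr0.ne'
    have hfne : 1 - (r₀ / r) ^ (m + 3) ≠ 0 := hf.ne'
    have hrpow : (r : ℝ) ^ (m + 3) ≠ 0 := pow_ne_zero _ hrne
    set p := (r₀ / r) ^ (m + 3) with hp
    push_cast
    field_simp
    ring
  -- asymptotic bounds
  have hνpos : (0 : ℝ) < (n : ℝ) := by positivity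
  have h0 : Tendsto (fun r : ℝ => r ^ (-(n : ℝ))) atTop (nhds 0) :=
    tendsto_rpow_neg_atTop hνpos
  have huh0 : Tendsto uh atTop (nhds 0) := hu0.trans_tendsto h0
  have hee : (fun r : ℝ => r ^ (-(n : ℝ)) * r ^ (-(n : ℝ))) =ᶠ[atTop]
      fun r => r ^ (-2 * (n : ℝ)) := by
    filter_upwards [eventually_gt_atTop 0] with r hr
    rw [← Real.rpow_add hr]
    congr 1
    ring
  -- building blocks
  have hPO : (fun r : ℝ => (r₀ / r) ^ n) =O[atTop] fun r => r ^ (-(n : ℝ)) := by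
    have hPev : (fun r : ℝ => (r₀ / r) ^ n) =ᶠ[atTop] fun r => r₀ ^ n * r ^ (-(n : ℝ)) := by
      filter_upwards [eventually_gt_atTop 0] with r hr
      rw [div_pow, Real.rpow_neg hr.le, Real.rpow_natCast, div_eq_mul_inv]
    exact hPev.trans_isBigO ((Asymptotics.isBigO_refl _ _).const_mul_left _)
  have hmul1 : ∀ g : ℝ → ℝ, g =O[atTop] (fun r => r ^ (-(n : ℝ) - 1)) →
      (fun r => r * g r) =O[atTop] fun r => r ^ (-(n : ℝ)) := by
    intro g hg
    refine ((Asymptotics.isBigO_refl (fun r : ℝ => r) atTop).mul hg).trans_eventuallyEq ?_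
    filter_upwards [eventually_gt_atTop 0] with r hr
    rw [show r * r ^ (-(n : ℝ) - 1) = r ^ (1 : ℝ) * r ^ (-(n : ℝ) - 1) by
        rw [Real.rpow_one], ← Real.rpow_add hr]
    congr 1
    ring
  have hmul2 : ∀ g : ℝ → ℝ, g =O[atTop] (fun r => r ^ (-(n : ℝ) - 2)) →
      (fun r => r ^ 2 * g r) =O[atTop] fun r => r ^ (-(n : ℝ)) := by
    intro g hg
    refine ((Asymptotics.isBigO_refl (fun r : ℝ => r ^ 2) atTop).mul hg).trans_eventuallyEq ?_
    filter_upwards [eventually_gt_atTop 0] with r hr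
    rw [show (r : ℝ) ^ (2 : ℕ) = r ^ (2 : ℝ) by rw [Real.rpow_two],
      ← Real.rpow_add hr]
    congr 1
    ring
  have hBO := hmul1 _ hu1
  have hCO := hmul1 _ hv1
  have hEO := hmul1 _ hw1
  have hDO := hmul2 _ hv2
  have hKO := hmul2 _ hw2
  -- T1 bound
  have hT1O : (fun r => auxT1 n uh vh wh r) =O[atTop] fun r => r ^ (-(n : ℝ)) := by
    have h := (((((hBO.const_mul_left ((n : ℝ) - 1)).sub
      (hCO.const_mul_left ((n : ℝ) + 1))).sub hDO).sub
      (hEO.const_mul_left (((n : ℝ) - 2) * ((n : ℝ) + 1)))).sub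
      (hKO.const_mul_left ((n : ℝ) - 2))).const_mul_left (2 : ℝ)
    exact h.congr (fun x => by simp only [auxT1]) fun x => rfl
  -- M bound
  have hsmall_one : (fun r : ℝ => r ^ (-(n : ℝ))) =O[atTop] (fun _ => (1 : ℝ)) :=
    h0.isBigO_one ℝ
  have hMO : (fun r => auxM n r₀ uh vh wh r) =O[atTop] fun r => r ^ (-2 * (n : ℝ)) := by
    have hZ : (fun r => (2 - (n : ℝ)) * (r * deriv uh r + r * deriv vh r) +
        2 * ((n : ℝ) - 2) * (r * deriv wh r) + 2 * (r ^ 2 * deriv (deriv vh) r) +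
        2 * ((n : ℝ) - 2) * (r ^ 2 * deriv (deriv wh) r)) =O[atTop]
        fun r => r ^ (-(n : ℝ)) :=
      ((((hBO.add hCO).const_mul_left ((2 : ℝ) - (n : ℝ))).add
        (hEO.const_mul_left (2 * ((n : ℝ) - 2)))).add (hDO.const_mul_left 2)).add
        (hKO.const_mul_left (2 * ((n : ℝ) - 2)))
    have hQ : (fun r => 2 * ((r * deriv uh r) * (r * deriv vh r) +
        ((n : ℝ) - 2) * ((r * deriv uh r) * (r * deriv wh r)) -
        ((n : ℝ) - 2) * ((r * deriv vh r) * (r * deriv wh r)) -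
        (r * deriv vh r) * (r * deriv vh r) -
        ((n : ℝ) - 1) * ((n : ℝ) - 2) / 2 * ((r * deriv wh r) * (r * deriv wh r))))
        =O[atTop] fun r => r ^ (-(n : ℝ)) * r ^ (-(n : ℝ)) :=
      ((((hBO.mul hCO).add ((hBO.mul hEO).const_mul_left ((n : ℝ) - 2))).sub
        ((hCO.mul hEO).const_mul_left ((n : ℝ) - 2))).sub (hCO.mul hCO)).sub
        ((hEO.mul hEO).const_mul_left (((n : ℝ) - 1) * ((n : ℝ) - 2) / 2))
        |>.const_mul_left 2
    have honemP : (fun r : ℝ => 1 - (r₀ / r) ^ n) =O[atTop] (fun _ => (1 : ℝ)) := by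
      have : Tendsto (fun r : ℝ => 1 - (r₀ / r) ^ n) atTop (nhds (1 - 0)) :=
        (tendsto_const_nhds).sub (hPO.trans_tendsto h0)
      exact this.isBigO_one ℝ
    have h1 : (fun r : ℝ => (r₀ / r) ^ n *
        ((2 - (n : ℝ)) * (r * deriv uh r + r * deriv vh r) +
          2 * ((n : ℝ) - 2) * (r * deriv wh r) + 2 * (r ^ 2 * deriv (deriv vh) r) +
          2 * ((n : ℝ) - 2) * (r ^ 2 * deriv (deriv wh) r))) =O[atTop]
        fun r => r ^ (-2 * (n : ℝ)) :=
      (hPO.mul hZ).trans_eventuallyEq hee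
    have h2 : (fun r : ℝ => (1 - (r₀ / r) ^ n) *
        (2 * ((r * deriv uh r) * (r * deriv vh r) +
          ((n : ℝ) - 2) * ((r * deriv uh r) * (r * deriv wh r)) -
          ((n : ℝ) - 2) * ((r * deriv vh r) * (r * deriv wh r)) -
          (r * deriv vh r) * (r * deriv vh r) -
          ((n : ℝ) - 1) * ((n : ℝ) - 2) / 2 * ((r * deriv wh r) * (r * deriv wh r)))))
        =O[atTop] fun r => r ^ (-2 * (n : ℝ)) := by
      refine (honemP.mul (hQ.trans_eventuallyEq hee)).trans_eventuallyEq ?_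
      filter_upwards with r
      rw [one_mul]
    exact (h1.add h2).congr (fun x => by simp only [auxM]) fun x => rfl
  -- exponential bounds
  have hsmall : ∀ᶠ r in atTop, |uh r| ≤ 1 / 2 := by
    have := (Metric.tendsto_nhds.mp huh0) (1 / 2) (by norm_num)
    filter_upwards [this] with r h
    rw [Real.dist_eq, sub_zero] at h
    linarith
  have hEm1 : (fun r => Real.exp (-2 * uh r) - 1) =O[atTop] fun r => r ^ (-(n : ℝ)) := by
    refine (Asymptotics.isBigO_iff.2 ⟨4, ?_⟩ :
      (fun r => Real.exp (-2 * uh r) - 1) =O[atTop] uh).trans hu0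
    filter_upwards [hsmall] with r h
    have hx : |(-2 * uh r)| ≤ 1 := by
      rw [abs_mul, abs_neg]
      rw [show |(2 : ℝ)| = 2 by norm_num]
      linarith
    have := Real.abs_exp_sub_one_le hx
    rw [Real.norm_eq_abs, Real.norm_eq_abs]
    calc |Real.exp (-2 * uh r) - 1| ≤ 2 * |(-2 * uh r)| := this
      _ = 4 * |uh r| := by rw [abs_mul, abs_neg, show |(2 : ℝ)| = 2 by norm_num]; ring
  have hE2 : (fun r => Real.exp (-2 * uh r) - 1 + 2 * uh r) =O[atTop]
      fun r => r ^ (-2 * (n : ℝ)) := by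
    have hb : (fun r => Real.exp (-2 * uh r) - 1 + 2 * uh r) =O[atTop]
        fun r => uh r * uh r := by
      refine Asymptotics.isBigO_iff.2 ⟨4, ?_⟩
      filter_upwards [hsmall] with r h
      have hx : |(-2 * uh r)| ≤ 1 := by
        rw [abs_mul, abs_neg, show |(2 : ℝ)| = 2 by norm_num]
        linarith
      have hkey := Real.abs_exp_sub_one_sub_id_le hx
      rw [Real.norm_eq_abs, Real.norm_eq_abs]
      calc |Real.exp (-2 * uh r) - 1 + 2 * uh r|
          = |Real.exp (-2 * uh r) - 1 - (-2 * uh r)| := by ring_nf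
        _ ≤ (-2 * uh r) ^ 2 := hkey
        _ = 4 * (uh r * uh r) := by ring
        _ ≤ 4 * |uh r * uh r| := by
            have := le_abs_self (uh r * uh r)
            linarith
    exact hb.trans ((hu0.mul hu0).trans_eventuallyEq hee)
  have h2to1 : (fun r : ℝ => r ^ (-2 * (n : ℝ))) =O[atTop]
      fun r => r ^ (-(n : ℝ)) := by
    refine Asymptotics.isBigO_iff.2 ⟨1, ?_⟩
    filter_upwards [eventually_ge_atTop (1 : ℝ)] with r hr
    rw [one_mul, Real.norm_eq_abs, Real.norm_eq_abs,
      abs_of_nonneg (Real.rpow_nonneg (by linarith) _),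
      abs_of_nonneg (Real.rpow_nonneg (by linarith) _)]
    exact Real.rpow_le_rpow_of_exponent_le hr (by nlinarith [hνpos.le])
  -- assemble
  have hRHS : (fun r =>
      (Real.exp (-2 * uh r) - 1) * (auxT1 n uh vh wh r + auxM n r₀ uh vh wh r) -
        (n : ℝ) * ((n : ℝ) - 1) * (Real.exp (-2 * uh r) - 1 + 2 * uh r) +
        auxM n r₀ uh vh wh r) =O[atTop] fun r => r ^ (-2 * (n : ℝ)) := by
    have t1 : (fun r => (Real.exp (-2 * uh r) - 1) *
        (auxT1 n uh vh wh r + auxM n r₀ uh vh wh r)) =O[atTop]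
        fun r => r ^ (-2 * (n : ℝ)) :=
      (hEm1.mul (hT1O.add (hMO.trans h2to1))).trans_eventuallyEq hee
    exact (t1.sub (hE2.const_mul_left ((n : ℝ) * ((n : ℝ) - 1)))).add hMO
  exact Filter.EventuallyEq.trans_isBigO key hRHS
end

section
/- Fix an integer n ≥ 3, reals ℓ > 0, r₀ > 0, and let f(r) = (r²/ℓ²)(1 − (r₀/r)ⁿ). Then for every r ≥ r₀, −f″(r) + (n/(2r)) f′(r) + ((n−2)(n/2) − n²/4) f(r)/r² = (1/ℓ²)( n²/4 − 2 + (n² − 3n + 2 + n²/4)(r₀/r)ⁿ ) ≥ (n² − 8)/(4ℓ²) > 0. -/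
/-- The Horowitz–Myers radial profile `f(r) = (r²/ℓ²)(1 - (r₀/r)ⁿ)`. -/
noncomputable def fHM (n : ℕ) (ℓ r₀ r : ℝ) : ℝ := r ^ 2 / ℓ ^ 2 * (1 - (r₀ / r) ^ n)

/-- Power-form rewrite of `fHM`. -/
noncomputable def gHM (n : ℕ) (ℓ r₀ x : ℝ) : ℝ :=
  x ^ 2 / ℓ ^ 2 - r₀ ^ n / ℓ ^ 2 * x ^ ((2 : ℤ) - n)

/-- First derivative of `gHM`. -/
noncomputable def g1HM (n : ℕ) (ℓ r₀ x : ℝ) : ℝ :=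
  2 * x / ℓ ^ 2 - r₀ ^ n / ℓ ^ 2 * (2 - (n : ℝ)) * x ^ ((1 : ℤ) - n)

lemma fHM_eq_gHM (n : ℕ) (ℓ r₀ : ℝ) {x : ℝ} (hx : x ≠ 0) :
    fHM n ℓ r₀ x = gHM n ℓ r₀ x := by
  unfold fHM gHM
  rw [zpow_sub₀ hx, zpow_natCast, zpow_ofNat, div_pow]
  have hxn : x ^ n ≠ 0 := pow_ne_zero _ hx
  rw [mul_sub, mul_one]
  congr 1
  field_simp

lemma hasDerivAt_gHM (n : ℕ) (ℓ r₀ : ℝ) {x : ℝ} (hx : x ≠ 0) :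
    HasDerivAt (gHM n ℓ r₀) (g1HM n ℓ r₀ x) x := by
  have h1 := (hasDerivAt_pow 2 x).div_const (ℓ ^ 2)
  have h2 := (hasDerivAt_zpow ((2 : ℤ) - n) x (Or.inl hx)).const_mul (r₀ ^ n / ℓ ^ 2)
  have h := h1.sub h2
  refine h.congr_deriv ?_
  unfold g1HM
  have : ((2 : ℤ) - n - 1) = ((1 : ℤ) - n) := by ring
  rw [this]
  push_cast
  ring

lemma hasDerivAt_g1HM (n : ℕ) (ℓ r₀ : ℝ) {x : ℝ} (hx : x ≠ 0) :
    HasDerivAt (g1HM n ℓ r₀)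
      (2 / ℓ ^ 2 - r₀ ^ n / ℓ ^ 2 * (2 - (n : ℝ)) * (1 - (n : ℝ)) * x ^ (-(n : ℤ))) x := by
  have h1 := ((hasDerivAt_id x).const_mul (2 : ℝ)).div_const (ℓ ^ 2)
  have h2 := (hasDerivAt_zpow ((1 : ℤ) - n) x (Or.inl hx)).const_mul
    (r₀ ^ n / ℓ ^ 2 * (2 - (n : ℝ)))
  have h := h1.sub h2
  refine h.congr_deriv ?_
  have : ((1 : ℤ) - n - 1) = (-(n : ℤ)) := by ring
  rw [this]
  push_cast
  ring

/-- Pointwise identity and lower bound for the potential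
`W_{n/2}(f) = -f'' + (n/(2r)) f' + ((n-2)(n/2) - n²/4) f/r²`. -/
theorem stmt_12 (n : ℕ) (hn : 3 ≤ n) (ℓ r₀ : ℝ) (hℓ : 0 < ℓ) (hr₀ : 0 < r₀)
    (r : ℝ) (hr : r₀ ≤ r) :
    (-(deriv (deriv (fHM n ℓ r₀)) r) + (n : ℝ) / (2 * r) * deriv (fHM n ℓ r₀) r +
        (((n : ℝ) - 2) * ((n : ℝ) / 2) - (n : ℝ) ^ 2 / 4) * fHM n ℓ r₀ r / r ^ 2 =
      1 / ℓ ^ 2 *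
        ((n : ℝ) ^ 2 / 4 - 2 +
          ((n : ℝ) ^ 2 - 3 * (n : ℝ) + 2 + (n : ℝ) ^ 2 / 4) * (r₀ / r) ^ n)) ∧
    ((n : ℝ) ^ 2 - 8) / (4 * ℓ ^ 2) ≤
      1 / ℓ ^ 2 *
        ((n : ℝ) ^ 2 / 4 - 2 +
          ((n : ℝ) ^ 2 - 3 * (n : ℝ) + 2 + (n : ℝ) ^ 2 / 4) * (r₀ / r) ^ n) ∧
    0 < ((n : ℝ) ^ 2 - 8) / (4 * ℓ ^ 2) := by
  have hr0 : 0 < r := lt_of_lt_of_le hr₀ hr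
  have hrne : r ≠ 0 := ne_of_gt hr0
  have hℓne : ℓ ^ 2 ≠ 0 := by positivity
  have hn3 : (3 : ℝ) ≤ (n : ℝ) := by exact_mod_cast hn
  have hne : ∀ᶠ x in nhds r, x ≠ 0 := eventually_ne_nhds hrne
  have hfg : fHM n ℓ r₀ =ᶠ[nhds r] gHM n ℓ r₀ := by
    filter_upwards [hne] with x hx
    exact fHM_eq_gHM n ℓ r₀ hx
  have hdg : deriv (gHM n ℓ r₀) =ᶠ[nhds r] g1HM n ℓ r₀ := by
    filter_upwards [hne] with x hx
    exact (hasDerivAt_gHM n ℓ r₀ hx).deriv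
  have hd1 : deriv (fHM n ℓ r₀) r = g1HM n ℓ r₀ r := by
    rw [hfg.deriv_eq, (hasDerivAt_gHM n ℓ r₀ hrne).deriv]
  have hd2 : deriv (deriv (fHM n ℓ r₀)) r =
      2 / ℓ ^ 2 - r₀ ^ n / ℓ ^ 2 * (2 - (n : ℝ)) * (1 - (n : ℝ)) * r ^ (-(n : ℤ)) := by
    rw [hfg.deriv.deriv_eq, hdg.deriv_eq, (hasDerivAt_g1HM n ℓ r₀ hrne).deriv]
  have hrpow : r ^ n ≠ 0 := pow_ne_zero _ hrne
  refine ⟨?_, ?_, ?_⟩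
  · rw [hd1, hd2]
    unfold g1HM fHM
    rw [zpow_sub₀ hrne, zpow_natCast, zpow_one, zpow_neg, zpow_natCast, div_pow]
    field_simp
    ring
  · have ht : 0 ≤ (r₀ / r) ^ n := by positivity
    have hB : 0 ≤ (n : ℝ) ^ 2 - 3 * (n : ℝ) + 2 + (n : ℝ) ^ 2 / 4 := by nlinarith
    have hkey : ((n : ℝ) ^ 2 - 8) / (4 * ℓ ^ 2) = 1 / ℓ ^ 2 * ((n : ℝ) ^ 2 / 4 - 2) := by
      field_simp; ring
    rw [hkey]
    have hℓpos : 0 ≤ 1 / ℓ ^ 2 := by positivity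
    apply mul_le_mul_of_nonneg_left _ hℓpos
    nlinarith [mul_nonneg hB ht]
  · apply div_pos
    · nlinarith
    · positivity
end

section
/- Fix an integer n ≥ 3, reals ℓ > 0, r₀ > 0, and let f(r) = (r²/ℓ²)(1 − (r₀/r)ⁿ). Let h be a C¹ function on [r₀,∞) with h(r) = O(r^{−n}) and h′(r) = O(r^{−n−1}) as r → ∞. Then ∫_{r₀}^∞ ( f(r) h′(r)² − f″(r) h(r)² ) r^{n−1} dr ≥ 0. -/
open Filter MeasureTheory

open Set

noncomputable def F1 (n : ℕ) (ℓ r₀ r : ℝ) : ℝ :=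
  (2 * r - r₀ ^ n * ((2:ℝ) - n) * r / r ^ n) / ℓ ^ 2

noncomputable def F2 (n : ℕ) (ℓ r₀ r : ℝ) : ℝ :=
  (2 - r₀ ^ n * ((n:ℝ) - 1) * ((n:ℝ) - 2) / r ^ n) / ℓ ^ 2

lemma fHM_hasDerivAt (n : ℕ) (hn : 3 ≤ n) (ℓ r₀ : ℝ) (hℓ : ℓ ≠ 0) {r : ℝ} (hr : r ≠ 0) :
    HasDerivAt (fHM n ℓ r₀) (F1 n ℓ r₀ r) r := by
  obtain ⟨m, rfl⟩ := Nat.exists_eq_add_of_le hn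
  have h1 : HasDerivAt (fun x : ℝ => x ^ 2 / ℓ ^ 2) (2 * r / ℓ ^ 2) r := by
    simpa using (hasDerivAt_pow 2 r).div_const (ℓ ^ 2)
  have h2 : HasDerivAt (fun x : ℝ => r₀ / x) (r₀ * (-(r ^ 2)⁻¹)) r := by
    simpa [div_eq_mul_inv] using (hasDerivAt_inv hr).const_mul r₀
  have h3 := (h2.pow (3 + m)).const_sub 1
  have h4 := h1.mul h3
  refine h4.congr_deriv ?_
  simp only [Pi.pow_apply, Pi.mul_apply]
  rw [show 3 + m - 1 = m + 2 by omega]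
  unfold F1
  rw [div_pow, div_pow]
  field_simp
  ring

lemma F1_hasDerivAt (n : ℕ) (hn : 3 ≤ n) (ℓ r₀ : ℝ) (hℓ : ℓ ≠ 0) {r : ℝ} (hr : r ≠ 0) :
    HasDerivAt (F1 n ℓ r₀) (F2 n ℓ r₀ r) r := by
  obtain ⟨m, rfl⟩ := Nat.exists_eq_add_of_le hn
  have hpow : r ^ (3 + m) ≠ 0 := pow_ne_zero _ hr
  have h1 : HasDerivAt (fun x : ℝ => x / x ^ (3 + m))
      ((1 * r ^ (3 + m) - r * ((3 + m : ℕ) * r ^ (3 + m - 1))) / (r ^ (3 + m)) ^ 2) r :=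
    (hasDerivAt_id r).div (hasDerivAt_pow (3 + m) r) hpow
  have h2 : HasDerivAt (F1 (3 + m) ℓ r₀)
      ((2 * 1 - r₀ ^ (3 + m) * ((2:ℝ) - (3 + m : ℕ)) *
        ((1 * r ^ (3 + m) - r * ((3 + m : ℕ) * r ^ (3 + m - 1))) / (r ^ (3 + m)) ^ 2)) / ℓ ^ 2) r := by
    have := (((hasDerivAt_id r).const_mul 2).sub
      (h1.const_mul (r₀ ^ (3 + m) * ((2:ℝ) - (3 + m : ℕ))))).div_const (ℓ ^ 2)
    refine this.congr_of_eventuallyEq (Filter.Eventually.of_forall fun x => ?_)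
    unfold F1
    simp [mul_div_assoc]
  refine h2.congr_deriv ?_
  unfold F2
  rw [show 3 + m - 1 = m + 2 by omega]
  field_simp
  ring

lemma deriv_fHM (n : ℕ) (hn : 3 ≤ n) (ℓ r₀ : ℝ) (hℓ : ℓ ≠ 0) {r : ℝ} (hr : r ≠ 0) :
    deriv (fHM n ℓ r₀) r = F1 n ℓ r₀ r :=
  (fHM_hasDerivAt n hn ℓ r₀ hℓ hr).deriv

lemma deriv2_fHM (n : ℕ) (hn : 3 ≤ n) (ℓ r₀ : ℝ) (hℓ : ℓ ≠ 0) {r : ℝ} (hr : 0 < r) :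
    deriv (deriv (fHM n ℓ r₀)) r = F2 n ℓ r₀ r := by
  have hev : deriv (fHM n ℓ r₀) =ᶠ[nhds r] F1 n ℓ r₀ := by
    filter_upwards [eventually_gt_nhds hr] with x hx
    exact deriv_fHM n hn ℓ r₀ hℓ (ne_of_gt hx)
  rw [hev.deriv_eq]
  exact (F1_hasDerivAt n hn ℓ r₀ hℓ (ne_of_gt hr)).deriv

lemma key_identity (n : ℕ) (hn : 3 ≤ n) (ℓ r₀ : ℝ) (hℓ : ℓ ≠ 0) {r : ℝ} (hr : r ≠ 0)
    (v d : ℝ) :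
    (fHM n ℓ r₀ r * d ^ 2 - F2 n ℓ r₀ r * v ^ 2) * r ^ (n - 1)
      + ((F1 n ℓ r₀ r * r ^ (n - 2) + ((n:ℝ) - 2) * fHM n ℓ r₀ r * r ^ (n - 3)) * v ^ 2
        + 2 * fHM n ℓ r₀ r * r ^ (n - 2) * v * d)
    = fHM n ℓ r₀ r * r ^ (n - 1) * (d + v / r) ^ 2
      + (((n:ℝ) - 3) / ℓ ^ 2 * r ^ (n - 1)
        + (1 + ((n:ℝ) - 1) * ((n:ℝ) - 2)) * r₀ ^ n / (ℓ ^ 2 * r)) * v ^ 2 := by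
  obtain ⟨m, rfl⟩ := Nat.exists_eq_add_of_le hn
  have e1 : 3 + m - 1 = m + 2 := by omega
  have e2 : 3 + m - 2 = m + 1 := by omega
  have e3 : 3 + m - 3 = m := by omega
  simp only [e1, e2, e3, fHM, F1, F2]
  push_cast
  rw [div_pow]
  field_simp
  ring

section main

variable (n : ℕ) (hn : 3 ≤ n) (ℓ r₀ : ℝ) (hℓ : 0 < ℓ) (hr₀ : 0 < r₀)
    (h : ℝ → ℝ) (hC1 : ContDiffOn ℝ 1 h (Set.Ici r₀))
    (hO : h =O[atTop] fun r => r ^ (-(n : ℝ)))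
    (hO' : deriv h =O[atTop] fun r => r ^ (-(n : ℝ) - 1))

-- D
noncomputable def D (r₀ : ℝ) (h : ℝ → ℝ) : ℝ → ℝ := derivWithin h (Set.Ici r₀)

noncomputable def gfun (n : ℕ) (ℓ r₀ : ℝ) (h : ℝ → ℝ) (r : ℝ) : ℝ :=
  fHM n ℓ r₀ r * r ^ (n - 2) * h r ^ 2

noncomputable def gd (n : ℕ) (ℓ r₀ : ℝ) (h : ℝ → ℝ) (r : ℝ) : ℝ :=
  (F1 n ℓ r₀ r * r ^ (n - 2) + ((n:ℝ) - 2) * fHM n ℓ r₀ r * r ^ (n - 3)) * h r ^ 2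
    + 2 * fHM n ℓ r₀ r * r ^ (n - 2) * h r * D r₀ h r

include hC1 in
lemma hD_eq : ∀ r ∈ Set.Ioi r₀, HasDerivAt h (D r₀ h r) r ∧ deriv h r = D r₀ h r := by
  intro r hr
  have hmem : Set.Ici r₀ ∈ nhds r := Ici_mem_nhds hr
  have hdiff : DifferentiableAt ℝ h r :=
    ((hC1.differentiableOn one_ne_zero) r (Set.mem_Ici.2 (le_of_lt hr))).differentiableAt hmem
  refine ⟨?_, ?_⟩
  · have := hdiff.hasDerivAt
    rwa [show deriv h r = D r₀ h r from (derivWithin_of_mem_nhds hmem).symm] at this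
  · exact (derivWithin_of_mem_nhds hmem).symm

include hn hℓ hr₀ hC1 in
lemma hg_deriv : ∀ r ∈ Set.Ioi r₀, HasDerivAt (gfun n ℓ r₀ h) (gd n ℓ r₀ h r) r := by
  intro r hr
  have hrpos : 0 < r := lt_trans hr₀ hr
  have h1 : HasDerivAt (fHM n ℓ r₀) (F1 n ℓ r₀ r) r :=
    fHM_hasDerivAt n hn ℓ r₀ (ne_of_gt hℓ) (ne_of_gt hrpos)
  have h2 : HasDerivAt (fun x : ℝ => x ^ (n - 2)) (((n:ℝ) - 2) * r ^ (n - 3)) r := by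
    have := hasDerivAt_pow (n - 2) r
    refine this.congr_deriv ?_
    have : ((n : ℝ) - 2) = ((n - 2 : ℕ) : ℝ) := by
      have : (2:ℕ) ≤ n := le_trans (by norm_num) hn
      push_cast [Nat.cast_sub this]
      ring
    rw [this, show n - 2 - 1 = n - 3 from by omega]
  have h3 : HasDerivAt h (D r₀ h r) r := (hD_eq r₀ h hC1 r hr).1
  have h4 : HasDerivAt (fun x => h x ^ 2) (2 * h r ^ (2 - 1) * D r₀ h r) r := h3.pow 2
  have := (h1.mul h2).mul h4
  refine this.congr_deriv ?_
  simp only [Pi.mul_apply]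
  unfold gd
  push_cast
  ring

include hr₀ in
lemma fHM_contOn : ContinuousOn (fHM n ℓ r₀) (Set.Ici r₀) := by
  apply ContinuousOn.mul
  · exact ((continuous_pow 2).continuousOn).div_const _
  · apply continuousOn_const.sub
    apply ContinuousOn.pow
    exact continuousOn_const.div continuousOn_id
      (fun x hx => ne_of_gt (lt_of_lt_of_le hr₀ hx))

include hr₀ in
lemma F1_contOn : ContinuousOn (F1 n ℓ r₀) (Set.Ici r₀) := by
  apply ContinuousOn.div_const
  apply ContinuousOn.sub
  · exact (continuous_const.mul continuous_id).continuousOn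
  · exact (continuousOn_const.mul continuousOn_id).div (continuousOn_pow n)
      (fun x hx => pow_ne_zero _ (ne_of_gt (lt_of_lt_of_le hr₀ hx)))

include hr₀ hC1 in
lemma gd_contOn : ContinuousOn (gd n ℓ r₀ h) (Set.Ici r₀) := by
  have hD : ContinuousOn (D r₀ h) (Set.Ici r₀) :=
    hC1.continuousOn_derivWithin (uniqueDiffOn_Ici r₀) le_rfl
  have hh : ContinuousOn h (Set.Ici r₀) := hC1.continuousOn
  apply ContinuousOn.add
  · exact (((F1_contOn n ℓ r₀ hr₀).mul (continuousOn_pow _)).add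
      ((continuousOn_const.mul (fHM_contOn n ℓ r₀ hr₀)).mul (continuousOn_pow _))).mul
      (hh.pow 2)
  · exact ((((continuousOn_const.mul (fHM_contOn n ℓ r₀ hr₀)).mul
      (continuousOn_pow _)).mul hh).mul hD)

include hr₀ hC1 in
lemma gfun_contOn : ContinuousOn (gfun n ℓ r₀ h) (Set.Ici r₀) :=
  ((fHM_contOn n ℓ r₀ hr₀).mul (continuousOn_pow _)).mul (hC1.continuousOn.pow 2)

lemma pow_bigO (k : ℕ) : (fun r : ℝ => r ^ k) =O[atTop] fun r => r ^ (k:ℝ) := by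
  simp only [Real.rpow_natCast]
  exact Asymptotics.isBigO_refl _ _

include hr₀ hℓ in
lemma fHM_bigO : fHM n ℓ r₀ =O[atTop] fun r => r ^ (2:ℝ) := by
  rw [Asymptotics.isBigO_iff]
  refine ⟨1 / ℓ ^ 2, ?_⟩
  filter_upwards [eventually_ge_atTop (max r₀ 1)] with r hrr
  have hr1 : (1:ℝ) ≤ r := le_trans (le_max_right _ _) hrr
  have hr0 : r₀ ≤ r := le_trans (le_max_left _ _) hrr
  have hrp : (0:ℝ) < r := lt_of_lt_of_le one_pos hr1
  have hq0 : 0 ≤ (r₀ / r) ^ n := pow_nonneg (div_nonneg (le_of_lt hr₀) (le_of_lt hrp)) n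
  have hq1 : (r₀ / r) ^ n ≤ 1 :=
    pow_le_one₀ (div_nonneg (le_of_lt hr₀) (le_of_lt hrp)) ((div_le_one hrp).2 hr0)
  have hℓ2 : (0:ℝ) < ℓ ^ 2 := by positivity
  rw [Real.norm_eq_abs, Real.norm_eq_abs, Real.rpow_two, abs_of_nonneg (sq_nonneg r)]
  unfold fHM
  rw [abs_mul]
  have h1 : |r ^ 2 / ℓ ^ 2| = r ^ 2 / ℓ ^ 2 := abs_of_nonneg (by positivity)
  have h2 : |1 - (r₀ / r) ^ n| ≤ 1 := abs_le.2 ⟨by linarith, by linarith⟩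
  rw [h1]
  calc r ^ 2 / ℓ ^ 2 * |1 - (r₀ / r) ^ n| ≤ r ^ 2 / ℓ ^ 2 * 1 := by
        apply mul_le_mul_of_nonneg_left h2 (by positivity)
    _ = 1 / ℓ ^ 2 * r ^ 2 := by ring

include hr₀ hℓ in
lemma F1_bigO : F1 n ℓ r₀ =O[atTop] fun r => r ^ (1:ℝ) := by
  rw [Asymptotics.isBigO_iff]
  refine ⟨(2 + r₀ ^ n * |(2:ℝ) - n|) / ℓ ^ 2, ?_⟩
  filter_upwards [eventually_ge_atTop (max r₀ 1)] with r hrr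
  have hr1 : (1:ℝ) ≤ r := le_trans (le_max_right _ _) hrr
  have hrp : (0:ℝ) < r := lt_of_lt_of_le one_pos hr1
  have hℓ2 : (0:ℝ) < ℓ ^ 2 := by positivity
  have hpow1 : (1:ℝ) ≤ r ^ n := one_le_pow₀ hr1
  have hfrac : r / r ^ n ≤ r := by
    rw [div_le_iff₀ (by positivity)]
    nlinarith
  have hfrac0 : 0 ≤ r / r ^ n := by positivity
  rw [Real.norm_eq_abs, Real.norm_eq_abs, Real.rpow_one, abs_of_pos hrp]
  unfold F1
  rw [abs_div, abs_of_pos hℓ2]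
  rw [div_le_iff₀ hℓ2]
  have hb : |2 * r - r₀ ^ n * ((2:ℝ) - n) * r / r ^ n| ≤ 2 * r + r₀ ^ n * |(2:ℝ) - n| * r := by
    calc |2 * r - r₀ ^ n * ((2:ℝ) - n) * r / r ^ n|
        ≤ |2 * r| + |r₀ ^ n * ((2:ℝ) - n) * r / r ^ n| := abs_sub _ _
      _ ≤ 2 * r + r₀ ^ n * |(2:ℝ) - n| * r := by
          apply add_le_add
          · rw [abs_of_pos (by positivity)]
          · rw [abs_div, abs_mul, abs_mul, abs_of_nonneg (pow_nonneg (le_of_lt hr₀) n),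
              abs_of_pos hrp, abs_of_pos (by positivity : (0:ℝ) < r ^ n), mul_div_assoc]
            have := mul_le_mul_of_nonneg_left hfrac
              (mul_nonneg (pow_nonneg (le_of_lt hr₀) n) (abs_nonneg ((2:ℝ) - n)))
            linarith
  calc |2 * r - r₀ ^ n * ((2:ℝ) - n) * r / r ^ n| ≤ 2 * r + r₀ ^ n * |(2:ℝ) - n| * r := hb
    _ = (2 + r₀ ^ n * |(2:ℝ) - n|) * r := by ring
    _ = (2 + r₀ ^ n * |(2:ℝ) - n|) / ℓ ^ 2 * r * ℓ ^ 2 := by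
        field_simp

lemma rpow_collapse (a b c d e : ℝ) (hsum : a + b + (c + d) = e) :
    (fun r : ℝ => r ^ a * r ^ b * (r ^ c * r ^ d)) =ᶠ[atTop] fun r : ℝ => r ^ e := by
  filter_upwards [eventually_gt_atTop 0] with r hr
  rw [← Real.rpow_add hr, ← Real.rpow_add hr, ← Real.rpow_add hr, hsum]

include hn hℓ hr₀ hC1 hO hO' in
lemma gd_bigO : gd n ℓ r₀ h =O[atTop] fun r => r ^ (-(n:ℝ) - 1) := by
  have hc2 : ((n - 2 : ℕ) : ℝ) = (n:ℝ) - 2 := by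
    rw [Nat.cast_sub (le_trans (by norm_num) hn)]; norm_num
  have hc3 : ((n - 3 : ℕ) : ℝ) = (n:ℝ) - 3 := by
    rw [Nat.cast_sub hn]; norm_num
  have hDO : D r₀ h =O[atTop] fun r => r ^ (-(n:ℝ) - 1) := by
    refine hO'.congr' ?_ Filter.EventuallyEq.rfl
    filter_upwards [eventually_gt_atTop r₀] with r hr
    exact (hD_eq r₀ h hC1 r hr).2
  have hh2 : (fun r => h r ^ 2) =O[atTop]
      fun r => r ^ (-(n:ℝ)) * r ^ (-(n:ℝ)) := by
    simpa [pow_two] using hO.mul hO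
  have t1 : (fun r => F1 n ℓ r₀ r * r ^ (n - 2) * h r ^ 2) =O[atTop]
      fun r => r ^ (-(n:ℝ) - 1) := by
    refine (((F1_bigO n ℓ r₀ hℓ hr₀).mul (pow_bigO (n - 2))).mul hh2).trans_eventuallyEq ?_
    rw [show ((n:ℕ) - 2 : ℕ) = (n - 2 : ℕ) from rfl]
    refine (rpow_collapse 1 ((n - 2 : ℕ) : ℝ) (-(n:ℝ)) (-(n:ℝ)) _ ?_)
    rw [hc2]; ring
  have t2 : (fun r => ((n:ℝ) - 2) * (fHM n ℓ r₀ r * r ^ (n - 3) * h r ^ 2)) =O[atTop]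
      fun r => r ^ (-(n:ℝ) - 1) := by
    refine Asymptotics.IsBigO.const_mul_left ?_ _
    refine (((fHM_bigO n ℓ r₀ hℓ hr₀).mul (pow_bigO (n - 3))).mul hh2).trans_eventuallyEq ?_
    refine (rpow_collapse 2 ((n - 3 : ℕ) : ℝ) (-(n:ℝ)) (-(n:ℝ)) _ ?_)
    rw [hc3]; ring
  have t3 : (fun r => (2:ℝ) * (fHM n ℓ r₀ r * r ^ (n - 2) * (h r * D r₀ h r))) =O[atTop]
      fun r => r ^ (-(n:ℝ) - 1) := by
    refine Asymptotics.IsBigO.const_mul_left ?_ _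
    refine (((fHM_bigO n ℓ r₀ hℓ hr₀).mul (pow_bigO (n - 2))).mul (hO.mul hDO)).trans_eventuallyEq ?_
    refine (rpow_collapse 2 ((n - 2 : ℕ) : ℝ) (-(n:ℝ)) (-(n:ℝ) - 1) _ ?_)
    rw [hc2]; ring
  have hgd : gd n ℓ r₀ h = fun r =>
      F1 n ℓ r₀ r * r ^ (n - 2) * h r ^ 2
        + ((n:ℝ) - 2) * (fHM n ℓ r₀ r * r ^ (n - 3) * h r ^ 2)
        + (2:ℝ) * (fHM n ℓ r₀ r * r ^ (n - 2) * (h r * D r₀ h r)) := by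
    funext r; simp only [gd]; ring
  rw [hgd]
  exact (t1.add t2).add t3

include hn hℓ hr₀ hC1 hO in
lemma gfun_bigO : gfun n ℓ r₀ h =O[atTop] fun r => r ^ (-(n:ℝ)) := by
  have hc2 : ((n - 2 : ℕ) : ℝ) = (n:ℝ) - 2 := by
    rw [Nat.cast_sub (le_trans (by norm_num) hn)]; norm_num
  have hh2 : (fun r => h r ^ 2) =O[atTop]
      fun r => r ^ (-(n:ℝ)) * r ^ (-(n:ℝ)) := by
    simpa [pow_two] using hO.mul hO
  refine (((fHM_bigO n ℓ r₀ hℓ hr₀).mul (pow_bigO (n - 2))).mul hh2).trans_eventuallyEq ?_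
  refine (rpow_collapse 2 ((n - 2 : ℕ) : ℝ) (-(n:ℝ)) (-(n:ℝ)) _ ?_)
  rw [hc2]; ring

include hr₀ in
lemma fHM_nonneg {r : ℝ} (hr : r₀ ≤ r) : 0 ≤ fHM n ℓ r₀ r := by
  have hrp : 0 < r := lt_of_lt_of_le hr₀ hr
  unfold fHM
  apply mul_nonneg (by positivity)
  rw [sub_nonneg]
  exact pow_le_one₀ (div_nonneg (le_of_lt hr₀) (le_of_lt hrp)) ((div_le_one hrp).2 hr)

include hn hℓ hr₀ hC1 hO hO' in
lemma gd_integrable : IntegrableOn (gd n ℓ r₀ h) (Set.Ioi r₀) := by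
  obtain ⟨C, hC⟩ := Asymptotics.isBigO_iff.1 (gd_bigO n hn ℓ r₀ hℓ hr₀ h hC1 hO hO')
  rw [Filter.eventually_atTop] at hC
  obtain ⟨R₀, hR₀⟩ := hC
  set R := max R₀ r₀ with hRdef
  have hr₀R : r₀ ≤ R := le_max_right _ _
  have hRpos : 0 < R := lt_of_lt_of_le hr₀ hr₀R
  rw [← Set.Ioc_union_Ioi_eq_Ioi hr₀R, integrableOn_union]
  constructor
  · exact (((gd_contOn n ℓ r₀ hr₀ h hC1).mono (Set.Icc_subset_Ici_self)).integrableOn_Icc).mono_set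
      Set.Ioc_subset_Icc_self
  · apply Integrable.mono' (g := fun r => |C| * r ^ (-(n:ℝ) - 1))
    · apply Integrable.const_mul
      refine integrableOn_Ioi_rpow_of_lt ?_ hRpos
      have : (0:ℝ) < n := by exact_mod_cast lt_of_lt_of_le (by norm_num) hn
      linarith
    · refine ((gd_contOn n ℓ r₀ hr₀ h hC1).mono ?_).aestronglyMeasurable measurableSet_Ioi
      exact fun x hx => le_of_lt (lt_of_le_of_lt hr₀R hx)
    · rw [ae_restrict_iff' measurableSet_Ioi]
      refine ae_of_all _ fun x hx => ?_
      have hx' : R₀ ≤ x := le_trans (le_max_left _ _) (le_of_lt hx)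
      have hxpos : 0 < x := lt_trans hRpos hx
      calc ‖gd n ℓ r₀ h x‖ ≤ C * ‖x ^ (-(n:ℝ) - 1)‖ := hR₀ x hx'
        _ ≤ |C| * ‖x ^ (-(n:ℝ) - 1)‖ :=
            mul_le_mul_of_nonneg_right (le_abs_self C) (norm_nonneg _)
        _ = |C| * x ^ (-(n:ℝ) - 1) := by
            rw [Real.norm_eq_abs, abs_of_pos (Real.rpow_pos_of_pos hxpos _)]

include hn hℓ hr₀ hC1 hO hO' in
lemma gd_integral_zero : ∫ r in Set.Ioi r₀, gd n ℓ r₀ h r = 0 := by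
  have hnpos : (0:ℝ) < n := by exact_mod_cast lt_of_lt_of_le (by norm_num) hn
  have htend : Tendsto (gfun n ℓ r₀ h) atTop (nhds 0) :=
    (gfun_bigO n hn ℓ r₀ hℓ hr₀ h hC1 hO).trans_tendsto (tendsto_rpow_neg_atTop hnpos)
  have h0 : gfun n ℓ r₀ h r₀ = 0 := by
    unfold gfun fHM
    rw [div_self (ne_of_gt hr₀)]
    simp
  rw [integral_Ioi_of_hasDerivAt_of_tendsto
    ((gfun_contOn n ℓ r₀ hr₀ h hC1) r₀ Set.self_mem_Ici)
    (hg_deriv n hn ℓ r₀ hℓ hr₀ h hC1)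
    (gd_integrable n hn ℓ r₀ hℓ hr₀ h hC1 hO hO')
    htend, h0, sub_zero]

include hn hℓ hr₀ hC1 in
lemma pointwise_nonneg {r : ℝ} (hr : r ∈ Set.Ioi r₀) :
    0 ≤ (fHM n ℓ r₀ r * deriv h r ^ 2 - deriv (deriv (fHM n ℓ r₀)) r * h r ^ 2) * r ^ (n - 1)
      + gd n ℓ r₀ h r := by
  have hrpos : 0 < r := lt_trans hr₀ hr
  have h3 : (3:ℝ) ≤ (n:ℝ) := by exact_mod_cast hn
  rw [(hD_eq r₀ h hC1 r hr).2, deriv2_fHM n hn ℓ r₀ (ne_of_gt hℓ) hrpos]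
  unfold gd
  rw [key_identity n hn ℓ r₀ (ne_of_gt hℓ) (ne_of_gt hrpos) (h r) (D r₀ h r)]
  apply add_nonneg
  · apply mul_nonneg
    · exact mul_nonneg (fHM_nonneg n ℓ r₀ hr₀ (le_of_lt hr)) (pow_nonneg (le_of_lt hrpos) _)
    · exact sq_nonneg _
  · apply mul_nonneg _ (sq_nonneg _)
    apply add_nonneg
    · apply mul_nonneg (div_nonneg (by linarith) (sq_nonneg ℓ)) (pow_nonneg (le_of_lt hrpos) _)
    · apply div_nonneg _ (le_of_lt (by positivity : (0:ℝ) < ℓ ^ 2 * r))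
      apply mul_nonneg _ (pow_nonneg (le_of_lt hr₀) n)
      nlinarith

end main

/-- Non-negativity of `∫ (f h'² - f'' h²) r^{n-1} dr`: the contribution of the
off-diagonal perturbation component to the second-order mass. -/
theorem stmt_13 (n : ℕ) (hn : 3 ≤ n) (ℓ r₀ : ℝ) (hℓ : 0 < ℓ) (hr₀ : 0 < r₀)
    (h : ℝ → ℝ) (hC1 : ContDiffOn ℝ 1 h (Set.Ici r₀))
    (hO : h =O[atTop] fun r => r ^ (-(n : ℝ)))
    (hO' : deriv h =O[atTop] fun r => r ^ (-(n : ℝ) - 1)) :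
    0 ≤ ∫ r in Set.Ioi r₀,
        (fHM n ℓ r₀ r * deriv h r ^ 2 - deriv (deriv (fHM n ℓ r₀)) r * h r ^ 2) *
          r ^ (n - 1) := by
  set Ifun : ℝ → ℝ := fun r =>
    (fHM n ℓ r₀ r * deriv h r ^ 2 - deriv (deriv (fHM n ℓ r₀)) r * h r ^ 2) * r ^ (n - 1)
    with hIfun
  by_cases hInt : IntegrableOn Ifun (Set.Ioi r₀) volume
  · have hgdInt := gd_integrable n hn ℓ r₀ hℓ hr₀ h hC1 hO hO'
    have hadd : ∫ r in Set.Ioi r₀, (Ifun r + gd n ℓ r₀ h r)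
        = (∫ r in Set.Ioi r₀, Ifun r) + ∫ r in Set.Ioi r₀, gd n ℓ r₀ h r :=
      integral_add hInt hgdInt
    have hnn : 0 ≤ ∫ r in Set.Ioi r₀, (Ifun r + gd n ℓ r₀ h r) := by
      apply setIntegral_nonneg measurableSet_Ioi
      intro r hr
      exact pointwise_nonneg n hn ℓ r₀ hℓ hr₀ h hC1 hr
    rw [gd_integral_zero n hn ℓ r₀ hℓ hr₀ h hC1 hO hO', add_zero] at hadd
    linarith [hadd ▸ hnn]
  · rw [MeasureTheory.integral_undef hInt]
end

section
/- Fix an integer n ≥ 3, reals ℓ > 0, r₀ > 0, and let f(r) = (r²/ℓ²)(1 − (r₀/r)ⁿ). Let h be a C¹ function on [r₀,∞) with h(r) = O(r^{−n}) and h′(r) = O(r^{−n−1}) as r → ∞. Then ∫_{r₀}^∞ f(r) ( h′(r)² − (2/r²) h(r)² ) r^{n−1} dr ≥ 0. -/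
open Filter MeasureTheory

section helpers
open Set Asymptotics

lemma rpow_isBigO_rpow {a b : ℝ} (hab : a ≤ b) :
    (fun r : ℝ => r ^ a) =O[atTop] fun r : ℝ => r ^ b := by
  rw [Asymptotics.isBigO_iff]
  refine ⟨1, ?_⟩
  filter_upwards [eventually_ge_atTop (1:ℝ)] with r hr
  rw [one_mul, Real.norm_of_nonneg (Real.rpow_nonneg (by linarith) _),
    Real.norm_of_nonneg (Real.rpow_nonneg (by linarith) _)]
  exact Real.rpow_le_rpow_of_exponent_le hr hab

lemma isBigO_rpow_mul {f g : ℝ → ℝ} {a b : ℝ} (hf : f =O[atTop] fun r : ℝ => r ^ a)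
    (hg : g =O[atTop] fun r : ℝ => r ^ b) :
    (fun r => f r * g r) =O[atTop] fun r : ℝ => r ^ (a + b) :=
  (hf.mul hg).congr' EventuallyEq.rfl (by
    filter_upwards [eventually_gt_atTop (0:ℝ)] with r hr
    exact (Real.rpow_add hr a b).symm)

lemma isBigO_sq {f : ℝ → ℝ} {a : ℝ} (hf : f =O[atTop] fun r : ℝ => r ^ a) :
    (fun r => f r ^ 2) =O[atTop] fun r : ℝ => r ^ (a + a) :=
  (isBigO_rpow_mul hf hf).congr'
    (Filter.EventuallyEq.of_eq (funext fun r => (pow_two (f r)).symm)) EventuallyEq.rfl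

lemma pow_isBigO_rpow (k : ℕ) :
    (fun r : ℝ => r ^ k) =O[atTop] fun r : ℝ => r ^ (k : ℝ) :=
  (Filter.EventuallyEq.of_eq (funext fun r => (Real.rpow_natCast r k).symm)).isBigO

lemma const_isBigO_rpow (c : ℝ) {b : ℝ} (hb : 0 ≤ b) :
    (fun _ : ℝ => c) =O[atTop] fun r : ℝ => r ^ b := by
  refine ((Asymptotics.isBigO_const_const c (one_ne_zero (α := ℝ)) atTop).congr'
    EventuallyEq.rfl ?_).trans (rpow_isBigO_rpow hb)
  exact Filter.EventuallyEq.of_eq (funext fun r => (Real.rpow_zero r).symm)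

lemma isBigO_one_div_rpow :
    (fun r : ℝ => 1 / r) =O[atTop] fun r : ℝ => r ^ (-1 : ℝ) := by
  apply Filter.EventuallyEq.isBigO
  filter_upwards [eventually_gt_atTop (0:ℝ)] with r hr
  rw [Real.rpow_neg hr.le, Real.rpow_one, one_div]

lemma Asymptotics.IsBigO.div_const' {f g : ℝ → ℝ} {l : Filter ℝ} (h : f =O[l] g) (c : ℝ) :
    (fun x => f x / c) =O[l] g := by
  simpa [div_eq_mul_inv, mul_comm] using h.const_mul_left c⁻¹

lemma integrableOn_Ioi_of_continuousOn_of_isBigO {a : ℝ} (g : ℝ → ℝ)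
    (hg : ContinuousOn g (Ici a))
    (hO : g =O[atTop] fun r : ℝ => r ^ (-2 : ℝ)) :
    IntegrableOn g (Ioi a) := by
  rw [Asymptotics.isBigO_iff] at hO
  obtain ⟨C, hC⟩ := hO
  obtain ⟨R₀, hR₀⟩ := Filter.eventually_atTop.mp hC
  set R := max R₀ (max a 1) with hR
  have haR : a ≤ R := le_max_of_le_right (le_max_left _ _)
  have hR1 : (1:ℝ) ≤ R := le_max_of_le_right (le_max_right _ _)
  have h1 : IntegrableOn g (Ioc a R) :=
    ((hg.mono (Icc_subset_Ici_self)).integrableOn_Icc).mono_set Ioc_subset_Icc_self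
  have h2 : IntegrableOn g (Ioi R) := by
    have hbase : IntegrableOn (fun r : ℝ => C * r ^ (-2:ℝ)) (Ioi R) :=
      (integrableOn_Ioi_rpow_of_lt (by norm_num) (by linarith)).const_mul C
    refine Integrable.mono' hbase ?_ ?_
    · exact (hg.mono fun x hx => le_trans haR (le_of_lt hx)).aestronglyMeasurable
        measurableSet_Ioi
    · rw [ae_restrict_iff' measurableSet_Ioi]
      filter_upwards with r hr
      rw [Set.mem_Ioi] at hr
      have := hR₀ r (le_max_left _ _ |>.trans hr.le)
      rwa [Real.norm_of_nonneg (Real.rpow_nonneg (by linarith) _)] at this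
  have := h1.union h2
  rwa [Ioc_union_Ioi_eq_Ioi haR] at this

end helpers

/-- Non-negativity of `∫ f (h'² - (2/r²) h²) r^{n-1} dr`: the contribution of
the trace-free toroidal perturbation components to the second-order mass. -/
theorem stmt_14 (n : ℕ) (hn : 3 ≤ n) (ℓ r₀ : ℝ) (hℓ : 0 < ℓ) (hr₀ : 0 < r₀)
    (h : ℝ → ℝ) (hC1 : ContDiffOn ℝ 1 h (Set.Ici r₀))
    (hO : h =O[atTop] fun r => r ^ (-(n : ℝ)))
    (hO' : deriv h =O[atTop] fun r => r ^ (-(n : ℝ) - 1)) :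
    0 ≤ ∫ r in Set.Ioi r₀,
        fHM n ℓ r₀ r * (deriv h r ^ 2 - 2 / r ^ 2 * h r ^ 2) * r ^ (n - 1) := by
  have hℓ2 : (0:ℝ) < ℓ ^ 2 := by positivity
  set D : ℝ → ℝ := derivWithin h (Set.Ici r₀) with hD
  have hhc : ContinuousOn h (Set.Ici r₀) := hC1.continuousOn
  have hDc : ContinuousOn D (Set.Ici r₀) :=
    hC1.continuousOn_derivWithin (uniqueDiffOn_Ici r₀) le_rfl
  have hderiv : ∀ r ∈ Set.Ioi r₀, HasDerivAt h (D r) r := fun r hr =>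
    ((hC1.differentiableOn one_ne_zero r (Set.mem_Ici.mpr (le_of_lt hr))).hasDerivWithinAt).hasDerivAt
      (Ici_mem_nhds hr)
  have hDeq : ∀ r ∈ Set.Ioi r₀, deriv h r = D r := fun r hr => (hderiv r hr).deriv
  have hDO : D =O[atTop] fun r => r ^ (-(n : ℝ) - 1) :=
    hO'.congr' (by filter_upwards [eventually_gt_atTop r₀] with r hr
                   exact hDeq r hr) Filter.EventuallyEq.rfl
  -- the auxiliary functions
  set G : ℝ → ℝ := fun r => (r ^ n - r₀ ^ n) / ℓ ^ 2 * h r ^ 2 with hGdef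
  set G' : ℝ → ℝ := fun r =>
      (n : ℝ) * r ^ (n - 1) / ℓ ^ 2 * h r ^ 2
      + (r ^ n - r₀ ^ n) / ℓ ^ 2 * (2 * h r * D r) with hG'def
  set P : ℝ → ℝ := fun r =>
      (r ^ (n + 1) - r₀ ^ n * r) / ℓ ^ 2 * (D r + 2 * h r / r) ^ 2
      + ((2 * (n : ℝ) - 6) * r ^ (n - 1) + 6 * r₀ ^ n / r) / ℓ ^ 2 * h r ^ 2 with hPdef
  -- derivative of G
  have hGderiv : ∀ r ∈ Set.Ioi r₀, HasDerivAt G (G' r) r := by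
    intro r hr
    have h1 : HasDerivAt (fun r : ℝ => (r ^ n - r₀ ^ n) / ℓ ^ 2)
        ((n : ℝ) * r ^ (n - 1) / ℓ ^ 2) r :=
      (((hasDerivAt_pow n r).sub_const _).div_const _)
    have h2 : HasDerivAt (fun r => h r ^ 2) (2 * h r * D r) r := by
      simpa using (hderiv r hr).fun_pow 2
    simpa [hG'def] using h1.fun_mul h2
  -- pointwise identity
  have hkey : ∀ r ∈ Set.Ioi r₀,
      fHM n ℓ r₀ r * (deriv h r ^ 2 - 2 / r ^ 2 * h r ^ 2) * r ^ (n - 1)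
        = P r - 2 * G' r := by
    intro r hr
    have hrpos : (0:ℝ) < r := lt_trans hr₀ hr
    have hrne : r ≠ 0 := ne_of_gt hrpos
    obtain ⟨m, rfl⟩ : ∃ m, n = m + 3 := ⟨n - 3, by omega⟩
    rw [hDeq r hr]
    show fHM (m + 3) ℓ r₀ r * (D r ^ 2 - 2 / r ^ 2 * h r ^ 2) * r ^ (m + 3 - 1)
        = _
    simp only [hPdef, hG'def, fHM, div_pow, show m + 3 - 1 = m + 2 from rfl]
    push_cast
    field_simp
    ring
  -- nonnegativity of P
  have hPpos : ∀ r ∈ Set.Ioi r₀, 0 ≤ P r := by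
    intro r hr
    have hrpos : (0:ℝ) < r := lt_trans hr₀ hr
    have hpow : r₀ ^ n ≤ r ^ n := pow_le_pow_left₀ hr₀.le (le_of_lt hr) n
    have e1 : 0 ≤ (r ^ (n + 1) - r₀ ^ n * r) / ℓ ^ 2 := by
      apply div_nonneg _ hℓ2.le
      have : r ^ (n+1) = r ^ n * r := pow_succ r n
      nlinarith
    have e2 : 0 ≤ ((2 * (n : ℝ) - 6) * r ^ (n - 1) + 6 * r₀ ^ n / r) / ℓ ^ 2 := by
      apply div_nonneg _ hℓ2.le
      have c1 : (0:ℝ) ≤ 2 * (n:ℝ) - 6 := by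
        have : (3:ℝ) ≤ (n:ℝ) := by exact_mod_cast hn
        linarith
      have c2 : (0:ℝ) ≤ r ^ (n - 1) := by positivity
      have c3 : (0:ℝ) ≤ 6 * r₀ ^ n / r := by positivity
      nlinarith
    exact add_nonneg (mul_nonneg e1 (sq_nonneg _)) (mul_nonneg e2 (sq_nonneg _))
  -- Big-O bounds
  have hnR : (3:ℝ) ≤ (n:ℝ) := by exact_mod_cast hn
  have hcast1 : ((n - 1 : ℕ) : ℝ) = (n : ℝ) - 1 := by
    have : 1 ≤ n := by omega
    push_cast [this]; ring
  have hh2 : (fun r => h r ^ 2) =O[atTop] fun r : ℝ => r ^ (-(n:ℝ) + -(n:ℝ)) :=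
    isBigO_sq hO
  have hA : (fun r : ℝ => (r ^ n - r₀ ^ n) / ℓ ^ 2) =O[atTop]
      fun r : ℝ => r ^ ((n : ℝ)) :=
    (((pow_isBigO_rpow n).sub (const_isBigO_rpow (r₀ ^ n)
      (by positivity))).div_const' _)
  have hG'O : G' =O[atTop] fun r : ℝ => r ^ (-2 : ℝ) := by
    have t1 : (fun r : ℝ => (n : ℝ) * r ^ (n - 1) / ℓ ^ 2 * h r ^ 2) =O[atTop]
        fun r : ℝ => r ^ (-2 : ℝ) := by
      refine (isBigO_rpow_mul (f := fun r : ℝ => (n : ℝ) * r ^ (n-1) / ℓ ^ 2)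
        (a := ((n - 1 : ℕ) : ℝ))
        (((pow_isBigO_rpow (n-1)).const_mul_left _).div_const' _) hh2).trans
        (rpow_isBigO_rpow ?_)
      rw [hcast1]; linarith
    have t2 : (fun r : ℝ => (r ^ n - r₀ ^ n) / ℓ ^ 2 * (2 * h r * D r)) =O[atTop]
        fun r : ℝ => r ^ (-2 : ℝ) := by
      refine (isBigO_rpow_mul hA (isBigO_rpow_mul (hO.const_mul_left 2) hDO)).trans
        (rpow_isBigO_rpow ?_)
      linarith
    exact t1.add t2
  have hsO : (fun r => D r + 2 * h r / r) =O[atTop]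
      fun r : ℝ => r ^ (-(n:ℝ) - 1) := by
    have t : (fun r : ℝ => 2 * h r / r) =O[atTop] fun r : ℝ => r ^ (-(n:ℝ) + -1) := by
      refine (isBigO_rpow_mul (hO.const_mul_left 2) isBigO_one_div_rpow).congr'
        ?_ Filter.EventuallyEq.rfl
      exact Filter.EventuallyEq.of_eq (funext fun r => by ring)
    have : (-(n:ℝ)) + -1 = -(n:ℝ) - 1 := by ring
    rw [this] at t
    exact hDO.add t
  have hPO : P =O[atTop] fun r : ℝ => r ^ (-2 : ℝ) := by
    have c1 : (fun r : ℝ => (r ^ (n + 1) - r₀ ^ n * r) / ℓ ^ 2) =O[atTop]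
        fun r : ℝ => r ^ (((n + 1 : ℕ)) : ℝ) := by
      refine (((pow_isBigO_rpow (n+1)).sub ?_).div_const' _)
      refine (((pow_isBigO_rpow 1).const_mul_left (r₀ ^ n)).congr'
        (Filter.EventuallyEq.of_eq (funext fun r => by ring))
        Filter.EventuallyEq.rfl).trans (rpow_isBigO_rpow ?_)
      push_cast; linarith
    have c2 : (fun r : ℝ => ((2 * (n : ℝ) - 6) * r ^ (n - 1) + 6 * r₀ ^ n / r) / ℓ ^ 2)
        =O[atTop] fun r : ℝ => r ^ (((n - 1 : ℕ)) : ℝ) := by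
      refine Asymptotics.IsBigO.div_const' (Asymptotics.IsBigO.add ?_ ?_) _
      · exact (pow_isBigO_rpow (n-1)).const_mul_left _
      · refine ((isBigO_one_div_rpow.const_mul_left (6 * r₀ ^ n)).congr'
          (Filter.EventuallyEq.of_eq (funext fun r => by ring))
          Filter.EventuallyEq.rfl).trans (rpow_isBigO_rpow ?_)
        rw [hcast1]; linarith
    have t1 := (isBigO_rpow_mul c1 (isBigO_sq hsO)).trans (rpow_isBigO_rpow
      (by push_cast; linarith : (((n + 1 : ℕ)) : ℝ) + ((-(n:ℝ) - 1) + (-(n:ℝ) - 1)) ≤ -2))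
    have t2 := (isBigO_rpow_mul c2 hh2).trans (rpow_isBigO_rpow
      (by rw [hcast1]; linarith : (((n - 1 : ℕ)) : ℝ) + (-(n:ℝ) + -(n:ℝ)) ≤ -2))
    exact t1.add t2
  have hGtend : Tendsto G atTop (nhds 0) := by
    have : G =O[atTop] fun r : ℝ => r ^ ((n:ℝ) + (-(n:ℝ) + -(n:ℝ))) :=
      isBigO_rpow_mul hA hh2
    have h2 : Tendsto (fun r : ℝ => r ^ ((n:ℝ) + (-(n:ℝ) + -(n:ℝ)))) atTop (nhds 0) := by
      have : (n:ℝ) + (-(n:ℝ) + -(n:ℝ)) = -(n:ℝ) := by ring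
      rw [this]
      exact tendsto_rpow_neg_atTop (by linarith)
    exact this.trans_tendsto h2
  -- continuity
  have hrne : ∀ r ∈ Set.Ici r₀, r ≠ 0 := fun r hr => ne_of_gt (lt_of_lt_of_le hr₀ hr)
  have hG'c : ContinuousOn G' (Set.Ici r₀) := by
    apply ContinuousOn.add
    · exact (continuousOn_const.mul (continuousOn_pow _)).div_const _ |>.mul (hhc.pow 2)
    · exact (((continuousOn_pow n).sub continuousOn_const).div_const _).mul
        ((continuousOn_const.mul hhc).mul hDc)
  have hPc : ContinuousOn P (Set.Ici r₀) := by
    apply ContinuousOn.add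
    · refine ((((continuousOn_pow (n+1)).sub
        (continuousOn_const.mul continuousOn_id)).div_const _).mul ?_)
      exact ((hDc.add ((continuousOn_const.mul hhc).div continuousOn_id hrne)).pow 2)
    · refine (ContinuousOn.div_const (ContinuousOn.add ?_ ?_) _).mul (hhc.pow 2)
      · exact continuousOn_const.mul (continuousOn_pow _)
      · exact (continuousOn_const.div continuousOn_id hrne)
  have hG'int : IntegrableOn G' (Set.Ioi r₀) :=
    integrableOn_Ioi_of_continuousOn_of_isBigO G' hG'c hG'O
  have hPint : IntegrableOn P (Set.Ioi r₀) :=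
    integrableOn_Ioi_of_continuousOn_of_isBigO P hPc hPO
  -- FTC
  have hFTC : ∫ r in Set.Ioi r₀, G' r = 0 - G r₀ :=
    integral_Ioi_of_hasDerivAt_of_tendsto
      ((((continuousOn_pow n).sub continuousOn_const).div_const _ |>.mul (hhc.pow 2))
        r₀ Set.self_mem_Ici)
      hGderiv hG'int hGtend
  have hGr₀ : G r₀ = 0 := by simp [hGdef]
  rw [hGr₀, sub_zero] at hFTC
  -- put it together
  rw [MeasureTheory.setIntegral_congr_fun measurableSet_Ioi hkey]
  rw [MeasureTheory.integral_sub hPint ((hG'int.const_mul 2))]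
  have : ∫ r in Set.Ioi r₀, 2 * G' r = 0 := by
    rw [MeasureTheory.integral_const_mul, hFTC]; ring
  rw [this, sub_zero]
  exact MeasureTheory.setIntegral_nonneg measurableSet_Ioi hPpos
end

section
/- Fix an integer n ≥ 3, reals ℓ > 0, r₀ > 0, and let f(r) = (r²/ℓ²)(1 − (r₀/r)ⁿ). Let ζ be a C¹ function on [r₀,∞) with ζ(r) = O(r^{−n}) and ζ′(r) = O(r^{−n−1}) as r → ∞, and let α ∈ ℝ. Then ∫_{r₀}^∞ f(r) ζ′(r)² r^{n−1} dr ≥ ∫_{r₀}^∞ ( α ( r f′(r) + (n−2) f(r) ) − α² f(r) ) ζ(r)² r^{n−3} dr. -/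
open Filter MeasureTheory Set Asymptotics

lemma rpow_add_evEq (c d : ℝ) :
    (fun r : ℝ => r ^ c * r ^ d) =ᶠ[atTop] fun r => r ^ (c + d) := by
  filter_upwards [eventually_gt_atTop 0] with r hr
  rw [Real.rpow_add hr]

lemma Asymptotics.IsBigO.mul_rpow {f g : ℝ → ℝ} {c d : ℝ}
    (hf : f =O[atTop] fun r : ℝ => r ^ c) (hg : g =O[atTop] fun r : ℝ => r ^ d) :
    (fun r => f r * g r) =O[atTop] fun r : ℝ => r ^ (c + d) :=
  (hf.mul hg).congr' EventuallyEq.rfl (rpow_add_evEq c d)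

lemma isBigO_npow (k : ℕ) : (fun r : ℝ => r ^ k) =O[atTop] fun r : ℝ => r ^ ((k : ℕ) : ℝ) := by
  apply (Asymptotics.isBigO_refl (fun r : ℝ => r ^ k) atTop).congr' EventuallyEq.rfl
  filter_upwards with r
  rw [Real.rpow_natCast]

lemma isBigO_id_rpow : (fun r : ℝ => r) =O[atTop] fun r : ℝ => r ^ (1 : ℝ) := by
  apply (Asymptotics.isBigO_refl (fun r : ℝ => r) atTop).congr' EventuallyEq.rfl
  filter_upwards with r
  rw [Real.rpow_one]

lemma integrableOn_Ioi_of_isBigO {a : ℝ} (ha : 0 < a) {h : ℝ → ℝ} {c : ℝ}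
    (hc : c < -1) (hcont : ContinuousOn h (Set.Ici a))
    (hO : h =O[atTop] fun r : ℝ => r ^ c) : IntegrableOn h (Set.Ioi a) := by
  obtain ⟨C, hC⟩ := hO.bound
  rw [eventually_atTop] at hC
  obtain ⟨b₀, hb₀⟩ := hC
  set b : ℝ := max b₀ (max a 1) with hb
  have hab : a ≤ b := le_trans (le_max_left a 1) (le_max_right _ _)
  have h1b : (1 : ℝ) ≤ b := le_trans (le_max_right a 1) (le_max_right _ _)
  have h0b : (0 : ℝ) < b := lt_of_lt_of_le one_pos h1b
  have hIoc : IntegrableOn h (Ioc a b) :=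
    ((hcont.mono Icc_subset_Ici_self).integrableOn_Icc).mono_set Ioc_subset_Icc_self
  have hIoi : IntegrableOn h (Ioi b) := by
    have hint : IntegrableOn (fun r : ℝ => C * r ^ c) (Ioi b) :=
      (integrableOn_Ioi_rpow_of_lt hc h0b).const_mul C
    refine hint.mono' ?_ ?_
    · exact (hcont.mono fun x hx => le_trans hab (le_of_lt hx)).aestronglyMeasurable
        measurableSet_Ioi
    · rw [ae_restrict_iff' measurableSet_Ioi]
      filter_upwards with r hr
      have hrb : b₀ ≤ r := le_trans (le_max_left _ _) (le_of_lt hr)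
      have hr0 : (0 : ℝ) < r := lt_trans h0b hr
      calc ‖h r‖ ≤ C * ‖(r : ℝ) ^ c‖ := hb₀ r hrb
        _ = C * r ^ c := by rw [Real.norm_eq_abs, abs_of_pos (Real.rpow_pos_of_pos hr0 c)]
  have hU : Ioc a b ∪ Ioi b = Ioi a := Ioc_union_Ioi_eq_Ioi hab
  rw [← hU]
  exact hIoc.union hIoi

lemma fHM_hasDerivAt_s15 (n : ℕ) (ℓ r₀ : ℝ) {r : ℝ} (hr : r ≠ 0) :
    HasDerivAt (fHM n ℓ r₀)
      (2 * r / ℓ ^ 2 * (1 - (r₀ / r) ^ n) +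
        r ^ 2 / ℓ ^ 2 * ((n : ℝ) * (r₀ / r) ^ (n - 1) * (r₀ / r ^ 2))) r := by
  have h1 : HasDerivAt (fun r : ℝ => r₀ / r) (-(r₀ / r ^ 2)) r := by
    have h := (hasDerivAt_const r r₀).div (hasDerivAt_id r) hr
    refine h.congr_deriv ?_
    simp only [id]
    ring
  have h3 := (h1.pow n).const_sub 1
  have h4 : HasDerivAt (fun r : ℝ => r ^ 2 / ℓ ^ 2) (2 * r / ℓ ^ 2) r := by
    refine ((hasDerivAt_pow 2 r).div_const (ℓ ^ 2)).congr_deriv ?_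
    norm_num
  have h5 := h4.mul h3
  refine h5.congr_deriv ?_
  simp only [Pi.pow_apply]
  ring

/-- The Hardy-type inequality
`∫ f ζ'² r^{n-1} dr ≥ ∫ (α (r f' + (n-2) f) - α² f) ζ² r^{n-3} dr`. -/
theorem stmt_15 (n : ℕ) (hn : 3 ≤ n) (ℓ r₀ : ℝ) (hℓ : 0 < ℓ) (hr₀ : 0 < r₀)
    (ζ : ℝ → ℝ) (hC1 : ContDiffOn ℝ 1 ζ (Set.Ici r₀))
    (hO : ζ =O[atTop] fun r => r ^ (-(n : ℝ)))
    (hO' : deriv ζ =O[atTop] fun r => r ^ (-(n : ℝ) - 1)) (α : ℝ) :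
    (∫ r in Set.Ioi r₀,
        (α * (r * deriv (fHM n ℓ r₀) r + ((n : ℝ) - 2) * fHM n ℓ r₀ r) -
          α ^ 2 * fHM n ℓ r₀ r) * ζ r ^ 2 * r ^ (n - 3)) ≤
      ∫ r in Set.Ioi r₀, fHM n ℓ r₀ r * deriv ζ r ^ 2 * r ^ (n - 1) := by
  obtain ⟨m, rfl⟩ := Nat.exists_eq_add_of_le hn
  clear hn
  simp only [Nat.add_sub_cancel_left, show 3 + m - 1 = m + 2 from by omega]
  have hmem : ∀ r : ℝ, r ∈ Set.Ioi r₀ → (0 : ℝ) < r := fun r hr => lt_trans hr₀ hr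
  set N : ℝ := ((3 + m : ℕ) : ℝ) with hN
  have hNval : N = (m : ℝ) + 3 := by rw [hN]; push_cast; ring
  set f : ℝ → ℝ := fHM (3 + m) ℓ r₀ with hf
  set φ : ℝ → ℝ := fun r => 2 * r / ℓ ^ 2 * (1 - (r₀ / r) ^ (3 + m)) +
      r ^ 2 / ℓ ^ 2 * (N * (r₀ / r) ^ (m + 2) * (r₀ / r ^ 2)) with hφ
  set g : ℝ → ℝ := derivWithin ζ (Set.Ici r₀) with hg
  -- derivative facts
  have hfd : ∀ r : ℝ, 0 < r → HasDerivAt f (φ r) r := by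
    intro r hr
    rw [hf, hφ, hN]
    simpa [show 3 + m - 1 = m + 2 from by omega] using
      fHM_hasDerivAt_s15 (3 + m) ℓ r₀ (ne_of_gt hr)
  have hderiv_f : ∀ r ∈ Set.Ioi r₀, deriv f r = φ r := fun r hr => (hfd r (hmem r hr)).deriv
  have hζdiff : ∀ r ∈ Set.Ioi r₀, HasDerivAt ζ (g r) r := by
    intro r hr
    have hnh : Set.Ici r₀ ∈ nhds r := Ici_mem_nhds hr
    have hd : DifferentiableAt ℝ ζ r :=
      ((hC1.differentiableOn one_ne_zero) r (mem_Ici.2 (le_of_lt hr))).differentiableAt hnh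
    have hge : g r = deriv ζ r := by rw [hg]; exact derivWithin_of_mem_nhds hnh
    rw [hge]; exact hd.hasDerivAt
  have hgd : ∀ r ∈ Set.Ioi r₀, deriv ζ r = g r := fun r hr => (hζdiff r hr).deriv
  -- continuity facts
  have hζc : ContinuousOn ζ (Set.Ici r₀) := hC1.continuousOn
  have hgc : ContinuousOn g (Set.Ici r₀) :=
    hC1.continuousOn_derivWithin (uniqueDiffOn_Ici r₀) le_rfl
  have hfc : ContinuousOn f (Set.Ici r₀) := fun x hx =>
    ((hfd x (lt_of_lt_of_le hr₀ hx)).differentiableAt.continuousAt).continuousWithinAt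
  have hφc : ContinuousOn φ (Set.Ici r₀) := by
    intro x hx
    have hx0 : x ≠ 0 := ne_of_gt (lt_of_lt_of_le hr₀ hx)
    have hx2 : x ^ 2 ≠ 0 := pow_ne_zero 2 hx0
    have c0 : ContinuousAt (fun r : ℝ => r₀ / r) x := continuousAt_const.div continuousAt_id hx0
    have c2 : ContinuousAt (fun r : ℝ => r₀ / r ^ 2) x :=
      continuousAt_const.div (continuousAt_id.pow 2) hx2
    exact ContinuousAt.continuousWithinAt
      ((((continuousAt_const.mul continuousAt_id).div_const _).mul
          (continuousAt_const.sub (c0.pow _))).add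
        (((continuousAt_id.pow 2).div_const _).mul
          ((continuousAt_const.mul (c0.pow _)).mul c2)))
  -- bounds on f and φ
  have hq : ∀ (r : ℝ), r₀ ≤ r → ∀ k : ℕ, 0 ≤ (r₀ / r) ^ k ∧ (r₀ / r) ^ k ≤ 1 := by
    intro r hr k
    have h0 : 0 < r := lt_of_lt_of_le hr₀ hr
    have h1 : 0 ≤ r₀ / r := le_of_lt (div_pos hr₀ h0)
    have h2 : r₀ / r ≤ 1 := (div_le_one h0).2 hr
    exact ⟨pow_nonneg h1 k, pow_le_one₀ h1 h2⟩
  have hf_nonneg : ∀ r : ℝ, r₀ ≤ r → 0 ≤ f r := by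
    intro r hr
    obtain ⟨h1, h2⟩ := hq r hr (3 + m)
    have h3 : (0 : ℝ) ≤ r ^ 2 / ℓ ^ 2 := by positivity
    rw [hf]
    unfold fHM
    nlinarith
  have hf_le : ∀ r : ℝ, r₀ ≤ r → f r ≤ r ^ 2 / ℓ ^ 2 := by
    intro r hr
    obtain ⟨h1, h2⟩ := hq r hr (3 + m)
    have h3 : (0 : ℝ) ≤ r ^ 2 / ℓ ^ 2 := by positivity
    rw [hf]
    unfold fHM
    nlinarith
  -- big-O facts
  have hfO : f =O[atTop] fun r : ℝ => r ^ (2 : ℝ) := by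
    apply Asymptotics.IsBigO.of_bound (1 / ℓ ^ 2)
    filter_upwards [eventually_ge_atTop r₀] with r hr
    have h0 : (0 : ℝ) < r := lt_of_lt_of_le hr₀ hr
    have hrp : r ^ (2 : ℝ) = r ^ (2 : ℕ) := by
      rw [← Real.rpow_natCast]; norm_num
    rw [Real.norm_eq_abs, Real.norm_eq_abs, abs_of_nonneg (hf_nonneg r hr), hrp,
      abs_of_nonneg (by positivity : (0:ℝ) ≤ r ^ (2:ℕ))]
    calc f r ≤ r ^ 2 / ℓ ^ 2 := hf_le r hr
      _ = 1 / ℓ ^ 2 * r ^ 2 := by ring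
  have hφO : φ =O[atTop] fun r : ℝ => r ^ (1 : ℝ) := by
    apply Asymptotics.IsBigO.of_bound ((m + 5) / ℓ ^ 2)
    filter_upwards [eventually_ge_atTop r₀] with r hr
    have h0 : (0 : ℝ) < r := lt_of_lt_of_le hr₀ hr
    obtain ⟨hq1, hq2⟩ := hq r hr (3 + m)
    obtain ⟨hq1', hq2'⟩ := hq r hr (m + 2)
    have hNpos : (0 : ℝ) ≤ N := by rw [hNval]; positivity
    have key : φ r = (2 * r * (1 - (r₀ / r) ^ (3 + m)) + N * (r₀ / r) ^ (m + 2) * r₀) / ℓ ^ 2 := by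
      rw [hφ]
      field_simp
    have hnum_nonneg : 0 ≤ 2 * r * (1 - (r₀ / r) ^ (3 + m)) + N * (r₀ / r) ^ (m + 2) * r₀ := by
      have t1 : 0 ≤ 2 * r * (1 - (r₀ / r) ^ (3 + m)) := mul_nonneg (by linarith) (by linarith)
      have t2 : 0 ≤ N * (r₀ / r) ^ (m + 2) * r₀ :=
        mul_nonneg (mul_nonneg hNpos hq1') (le_of_lt hr₀)
      linarith
    have hnum_le : 2 * r * (1 - (r₀ / r) ^ (3 + m)) + N * (r₀ / r) ^ (m + 2) * r₀
        ≤ ((m : ℝ) + 5) * r := by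
      have e3 : 2 * r * (1 - (r₀ / r) ^ (3 + m)) ≤ 2 * r := by nlinarith
      have e1 : (r₀ / r) ^ (m + 2) * r₀ ≤ r := by nlinarith
      have e2 : N * ((r₀ / r) ^ (m + 2) * r₀) ≤ N * r := mul_le_mul_of_nonneg_left e1 hNpos
      nlinarith [mul_le_mul_of_nonneg_right (le_of_eq hNval) (le_of_lt h0)]
    rw [Real.norm_eq_abs, Real.norm_eq_abs, Real.rpow_one, abs_of_pos h0, key,
      abs_of_nonneg (by positivity)]
    rw [div_le_iff₀ (by positivity : (0:ℝ) < ℓ ^ 2)]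
    calc 2 * r * (1 - (r₀ / r) ^ (3 + m)) + N * (r₀ / r) ^ (m + 2) * r₀
        ≤ ((m : ℝ) + 5) * r := hnum_le
      _ = ((m : ℝ) + 5) / ℓ ^ 2 * r * ℓ ^ 2 := by field_simp
  have hgO : g =O[atTop] fun r : ℝ => r ^ (-N - 1) := by
    refine hO'.congr' ?_ EventuallyEq.rfl
    filter_upwards [eventually_gt_atTop r₀] with r hr
    exact (hgd r hr)
  have hζsq : (fun r : ℝ => ζ r ^ 2) =O[atTop] fun r : ℝ => r ^ (-N + -N) := by
    refine (hO.mul_rpow hO).congr' ?_ EventuallyEq.rfl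
    filter_upwards with r
    ring
  have hgsq : (fun r : ℝ => g r ^ 2) =O[atTop] fun r : ℝ => r ^ ((-N - 1) + (-N - 1)) := by
    refine (hgO.mul_rpow hgO).congr' ?_ EventuallyEq.rfl
    filter_upwards with r
    ring
  -- atomic integrable pieces
  have hP1 : IntegrableOn (fun r : ℝ => r * φ r * ζ r ^ 2 * r ^ m) (Set.Ioi r₀) := by
    refine integrableOn_Ioi_of_isBigO hr₀ (show (1:ℝ) + 1 + (-N + -N) + (m:ℕ) < -1 by
      rw [hNval]; push_cast; linarith) ?_
      (((isBigO_id_rpow.mul_rpow hφO).mul_rpow hζsq).mul_rpow (isBigO_npow m))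
    exact ((continuous_id.continuousOn.mul hφc).mul (hζc.pow 2)).mul
      (continuous_pow m).continuousOn
  have hP2 : IntegrableOn (fun r : ℝ => f r * ζ r ^ 2 * r ^ m) (Set.Ioi r₀) := by
    refine integrableOn_Ioi_of_isBigO hr₀ (show (2:ℝ) + (-N + -N) + (m:ℕ) < -1 by
      rw [hNval]; push_cast; linarith) ?_
      ((hfO.mul_rpow hζsq).mul_rpow (isBigO_npow m))
    exact (hfc.mul (hζc.pow 2)).mul (continuous_pow m).continuousOn
  have hP3 : IntegrableOn (fun r : ℝ => f r * g r ^ 2 * r ^ (m + 2)) (Set.Ioi r₀) := by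
    refine integrableOn_Ioi_of_isBigO hr₀
      (show (2:ℝ) + ((-N - 1) + (-N - 1)) + ((m + 2 : ℕ) : ℝ) < -1 by
        rw [hNval]; push_cast; linarith) ?_
      ((hfO.mul_rpow hgsq).mul_rpow (isBigO_npow (m + 2)))
    exact (hfc.mul (hgc.pow 2)).mul (continuous_pow (m + 2)).continuousOn
  have hP4 : IntegrableOn (fun r : ℝ => φ r * r ^ (m + 1) * ζ r ^ 2) (Set.Ioi r₀) := by
    refine integrableOn_Ioi_of_isBigO hr₀
      (show (1:ℝ) + ((m + 1 : ℕ) : ℝ) + (-N + -N) < -1 by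
        rw [hNval]; push_cast; linarith) ?_
      ((hφO.mul_rpow (isBigO_npow (m + 1))).mul_rpow hζsq)
    exact (hφc.mul (continuous_pow (m + 1)).continuousOn).mul (hζc.pow 2)
  have hP6 : IntegrableOn (fun r : ℝ => f r * r ^ (m + 1) * (ζ r * g r)) (Set.Ioi r₀) := by
    refine integrableOn_Ioi_of_isBigO hr₀
      (show (2:ℝ) + ((m + 1 : ℕ) : ℝ) + (-N + (-N - 1)) < -1 by
        rw [hNval]; push_cast; linarith) ?_
      ((hfO.mul_rpow (isBigO_npow (m + 1))).mul_rpow (hO.mul_rpow hgO))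
    exact (hfc.mul (continuous_pow (m + 1)).continuousOn).mul (hζc.mul hgc)
  -- the boundary function F and its derivative F'
  set F : ℝ → ℝ := fun r => f r * r ^ (m + 1) * ζ r ^ 2 with hF
  set F' : ℝ → ℝ := fun r => φ r * r ^ (m + 1) * ζ r ^ 2 +
      f r * (((m : ℝ) + 1) * r ^ m) * ζ r ^ 2 + f r * r ^ (m + 1) * (2 * ζ r * g r) with hF'
  have hF'int : IntegrableOn F' (Set.Ioi r₀) := by
    have heq : F' = fun r : ℝ => φ r * r ^ (m + 1) * ζ r ^ 2 +
        (((m : ℝ) + 1) * (f r * ζ r ^ 2 * r ^ m) +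
          2 * (f r * r ^ (m + 1) * (ζ r * g r))) := by
      funext r; rw [hF']; ring
    rw [heq]
    exact hP4.add ((hP2.const_mul _).add (hP6.const_mul 2))
  have hFd : ∀ r ∈ Set.Ioi r₀, HasDerivAt F (F' r) r := by
    intro r hr
    have h1 := hfd r (hmem r hr)
    have h2 : HasDerivAt (fun x : ℝ => x ^ (m + 1)) (((m : ℝ) + 1) * r ^ m) r := by
      have := hasDerivAt_pow (m + 1) r
      simpa using this
    have h3 : HasDerivAt (fun x : ℝ => ζ x ^ 2) (2 * ζ r * g r) r := by
      have := (hζdiff r hr).pow 2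
      exact this.congr_deriv (by norm_num)
    have h5 := (h1.mul h2).mul h3
    refine h5.congr_deriv ?_
    rw [hF']
    simp only [Pi.mul_apply]
    ring
  have hF0 : F r₀ = 0 := by
    rw [hF]
    simp only [hf]
    unfold fHM
    rw [div_self (ne_of_gt hr₀)]
    simp
  have hFtend : Tendsto F atTop (nhds 0) := by
    have hFO : F =O[atTop] fun r : ℝ => r ^ ((2 : ℝ) + ((m + 1 : ℕ) : ℝ) + (-N + -N)) := by
      rw [hF]
      exact (hfO.mul_rpow (isBigO_npow (m + 1))).mul_rpow hζsq
    apply hFO.trans_tendsto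
    have he : (2 : ℝ) + ((m + 1 : ℕ) : ℝ) + (-N + -N) < 0 := by
      rw [hNval]; push_cast; linarith
    have := tendsto_rpow_neg_atTop (show (0:ℝ) < -((2 : ℝ) + ((m + 1 : ℕ) : ℝ) + (-N + -N)) by
      linarith)
    simpa using this
  have hFcont : ContinuousWithinAt F (Set.Ici r₀) r₀ :=
    ((hfc.mul (continuous_pow (m + 1)).continuousOn).mul (hζc.pow 2)) r₀ Set.self_mem_Ici
  have hFTC : ∫ r in Set.Ioi r₀, F' r = 0 := by
    rw [integral_Ioi_of_hasDerivAt_of_tendsto hFcont hFd hF'int hFtend, hF0, sub_zero]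
  -- the three integrands
  set Lt : ℝ → ℝ := fun r => (α * (r * φ r + (N - 2) * f r) - α ^ 2 * f r) * ζ r ^ 2 * r ^ m
    with hLt
  set Rt : ℝ → ℝ := fun r => f r * g r ^ 2 * r ^ (m + 2) with hRt
  set S : ℝ → ℝ := fun r => f r * (g r + α * ζ r / r) ^ 2 * r ^ (m + 2) with hS
  have hLtint : IntegrableOn Lt (Set.Ioi r₀) := by
    have heq : Lt = fun r : ℝ => α * (r * φ r * ζ r ^ 2 * r ^ m) +
        (α * (N - 2) - α ^ 2) * (f r * ζ r ^ 2 * r ^ m) := by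
      funext r; rw [hLt]; ring
    rw [heq]
    exact (hP1.const_mul α).add (hP2.const_mul _)
  have hLeq : (∫ r in Set.Ioi r₀,
      (α * (r * deriv f r + (N - 2) * f r) - α ^ 2 * f r) * ζ r ^ 2 * r ^ m)
      = ∫ r in Set.Ioi r₀, Lt r := by
    refine setIntegral_congr_fun measurableSet_Ioi fun r hr => ?_
    rw [hLt]
    simp only [hderiv_f r hr]
  have hReq : (∫ r in Set.Ioi r₀, f r * deriv ζ r ^ 2 * r ^ (m + 2))
      = ∫ r in Set.Ioi r₀, Rt r := by
    refine setIntegral_congr_fun measurableSet_Ioi fun r hr => ?_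
    rw [hRt]
    simp only [hgd r hr]
  have hkey : (∫ r in Set.Ioi r₀, Rt r) - (∫ r in Set.Ioi r₀, Lt r)
      = ∫ r in Set.Ioi r₀, S r := by
    have h1 : (∫ r in Set.Ioi r₀, Rt r) - (∫ r in Set.Ioi r₀, Lt r)
        = ∫ r in Set.Ioi r₀, (Rt r - Lt r) := (integral_sub hP3 hLtint).symm
    have h2 : (∫ r in Set.Ioi r₀, (Rt r - Lt r + α * F' r))
        = (∫ r in Set.Ioi r₀, (Rt r - Lt r)) + α * ∫ r in Set.Ioi r₀, F' r := by
      have hsub : IntegrableOn (fun r : ℝ => Rt r - Lt r) (Set.Ioi r₀) := hP3.sub hLtint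
      rw [integral_add hsub (hF'int.const_mul α), integral_const_mul]
    have h3 : (∫ r in Set.Ioi r₀, (Rt r - Lt r + α * F' r)) = ∫ r in Set.Ioi r₀, S r := by
      refine setIntegral_congr_fun measurableSet_Ioi fun r hr => ?_
      have hr0 : r ≠ 0 := ne_of_gt (hmem r hr)
      rw [hRt, hLt, hF', hS, hNval]
      field_simp
      ring
    rw [h1, ← h3, h2, hFTC, mul_zero, add_zero]
  have hSnonneg : 0 ≤ ∫ r in Set.Ioi r₀, S r := by
    refine setIntegral_nonneg measurableSet_Ioi fun r hr => ?_
    rw [hS]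
    have h1 : 0 ≤ f r := hf_nonneg r (le_of_lt hr)
    have h2 : (0:ℝ) < r := hmem r hr
    positivity
  rw [hLeq, hReq]
  linarith
end

section
/- Let n = 3, ℓ = r₀ = 1, f(r) = r² − r^{−1}, φ(r) = r^{−5} and ξ(r) = (30 − 11r³)/(3r⁵). Then I := ∫₁^∞ [ (5/24) f(r) φ′(r)² + (f(r)/8) ξ′(r)² − (1/2)( f′(r)/r − f″(r)/4 ) ξ(r)² − (5/(4r³)) ξ(r) φ(r) + (5/24) φ(r)² ] r² dr = −79/84. -/
open MeasureTheory

lemma dphi' {r : ℝ} (hr : 0 < r) :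
    deriv (fun t : ℝ => (t ^ 5)⁻¹) r = -5 / r ^ 6 := by
  rw [show deriv (fun t : ℝ => (t ^ 5)⁻¹) r = _ from ((hasDerivAt_pow 5 r).inv (pow_ne_zero 5 hr.ne')).deriv]
  field_simp
  ring

lemma dxi' {r : ℝ} (hr : 0 < r) :
    deriv (fun t : ℝ => (30 - 11 * t ^ 3) / (3 * t ^ 5)) r
      = 22 / (3 * r ^ 3) - 50 / r ^ 6 := by
  have h := (((hasDerivAt_const r (30 : ℝ)).sub ((hasDerivAt_pow 3 r).const_mul 11)).div
    ((hasDerivAt_pow 5 r).const_mul 3) (by positivity)).deriv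
  rw [show deriv (fun t : ℝ => (30 - 11 * t ^ 3) / (3 * t ^ 5)) r = _ from h]
  simp only [Pi.sub_apply]
  field_simp
  ring

lemma df' {r : ℝ} (hr : 0 < r) :
    deriv (fun t : ℝ => t ^ 2 - t⁻¹) r = 2 * r + (r ^ 2)⁻¹ := by
  rw [show deriv (fun t : ℝ => t ^ 2 - t⁻¹) r = _ from ((hasDerivAt_pow 2 r).sub (hasDerivAt_inv hr.ne')).deriv]
  push_cast
  ring

lemma df'' {r : ℝ} (hr : 1 < r) :
    deriv (deriv (fun t : ℝ => t ^ 2 - t⁻¹)) r = 2 - 2 / r ^ 3 := by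
  have h0 : (0 : ℝ) < r := lt_trans zero_lt_one hr
  have hev : deriv (fun t : ℝ => t ^ 2 - t⁻¹) =ᶠ[nhds r] fun t => 2 * t + (t ^ 2)⁻¹ := by
    filter_upwards [eventually_gt_nhds h0] with t ht using df' ht
  rw [hev.deriv_eq]
  have h2 := ((hasDerivAt_id r).const_mul 2).add
    ((hasDerivAt_pow 2 r).inv (pow_ne_zero 2 h0.ne'))
  simp only [id_eq] at h2
  rw [show deriv (fun t : ℝ => 2 * t + (t ^ 2)⁻¹) r = _ from h2.deriv]
  field_simp
  ring

/-- With `n = 3`, `ℓ = r₀ = 1`, `f(r) = r² - r⁻¹`, `φ(r) = r⁻⁵` and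
`ξ(r) = (30 - 11r³)/(3r⁵)`, the remainder functional
`I = ∫₁^∞ [ (5/24) f φ'² + (f/8) ξ'² - ½(f'/r - f''/4) ξ² - (5/(4r³)) ξ φ
  + (5/24) φ² ] r² dr` equals `-79/84`. -/
theorem stmt_19 :
    (∫ r in Set.Ioi (1 : ℝ),
        (5 / 24 * (r ^ 2 - r⁻¹) * (deriv (fun t : ℝ => (t ^ 5)⁻¹) r) ^ 2 +
            (r ^ 2 - r⁻¹) / 8 *
              (deriv (fun t : ℝ => (30 - 11 * t ^ 3) / (3 * t ^ 5)) r) ^ 2 -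
            1 / 2 *
              (deriv (fun t : ℝ => t ^ 2 - t⁻¹) r / r -
                deriv (deriv (fun t : ℝ => t ^ 2 - t⁻¹)) r / 4) *
              ((30 - 11 * r ^ 3) / (3 * r ^ 5)) ^ 2 -
            5 / (4 * r ^ 3) * ((30 - 11 * r ^ 3) / (3 * r ^ 5)) * (r ^ 5)⁻¹ +
            5 / 24 * ((r ^ 5)⁻¹) ^ 2) *
          r ^ 2) = -79 / 84 := by
  have hcongr : ∀ r ∈ Set.Ioi (1 : ℝ),
      (5 / 24 * (r ^ 2 - r⁻¹) * (deriv (fun t : ℝ => (t ^ 5)⁻¹) r) ^ 2 +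
            (r ^ 2 - r⁻¹) / 8 *
              (deriv (fun t : ℝ => (30 - 11 * t ^ 3) / (3 * t ^ 5)) r) ^ 2 -
            1 / 2 *
              (deriv (fun t : ℝ => t ^ 2 - t⁻¹) r / r -
                deriv (deriv (fun t : ℝ => t ^ 2 - t⁻¹)) r / 4) *
              ((30 - 11 * r ^ 3) / (3 * r ^ 5)) ^ 2 -
            5 / (4 * r ^ 3) * ((30 - 11 * r ^ 3) / (3 * r ^ 5)) * (r ^ 5)⁻¹ +
            5 / 24 * ((r ^ 5)⁻¹) ^ 2) *
          r ^ 2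
        = 2365 / 6 * r ^ (-8 : ℝ) + (-9725 / 24) * r ^ (-11 : ℝ)
            + (-1925 / 36) * r ^ (-5 : ℝ) + (-121 / 36) * r ^ (-2 : ℝ) := by
    intro r hr
    have hr1 : (1 : ℝ) < r := hr
    have h0 : (0 : ℝ) < r := lt_trans zero_lt_one hr1
    have e8 : r ^ (-8 : ℝ) = (r ^ (8 : ℕ))⁻¹ := by
      rw [← Real.rpow_natCast r 8, ← Real.rpow_neg h0.le]; norm_num
    have e11 : r ^ (-11 : ℝ) = (r ^ (11 : ℕ))⁻¹ := by
      rw [← Real.rpow_natCast r 11, ← Real.rpow_neg h0.le]; norm_num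
    have e5 : r ^ (-5 : ℝ) = (r ^ (5 : ℕ))⁻¹ := by
      rw [← Real.rpow_natCast r 5, ← Real.rpow_neg h0.le]; norm_num
    have e2 : r ^ (-2 : ℝ) = (r ^ (2 : ℕ))⁻¹ := by
      rw [← Real.rpow_natCast r 2, ← Real.rpow_neg h0.le]; norm_num
    rw [dphi' h0, dxi' h0, df' h0, df'' hr1, e8, e11, e5, e2]
    field_simp
    ring
  rw [setIntegral_congr_fun measurableSet_Ioi hcongr]
  have hF : ∀ x ∈ Set.Ici (1 : ℝ),
      HasDerivAt (fun x : ℝ => -(2365 / 42) * x ^ (-7 : ℝ) + 9725 / 240 * x ^ (-10 : ℝ)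
        + 1925 / 144 * x ^ (-4 : ℝ) + 121 / 36 * x ^ (-1 : ℝ))
        (2365 / 6 * x ^ (-8 : ℝ) + (-9725 / 24) * x ^ (-11 : ℝ)
          + (-1925 / 36) * x ^ (-5 : ℝ) + (-121 / 36) * x ^ (-2 : ℝ)) x := by
    intro x hx
    have hx0 : x ≠ 0 := by have : (1:ℝ) ≤ x := hx; positivity
    have h := ((((Real.hasDerivAt_rpow_const (p := (-7:ℝ)) (Or.inl hx0)).const_mul
        (-(2365/42) : ℝ)).add ((Real.hasDerivAt_rpow_const (p := (-10:ℝ))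
        (Or.inl hx0)).const_mul (9725/240 : ℝ))).add
        ((Real.hasDerivAt_rpow_const (p := (-4:ℝ)) (Or.inl hx0)).const_mul
        (1925/144 : ℝ))).add ((Real.hasDerivAt_rpow_const (p := (-1:ℝ))
        (Or.inl hx0)).const_mul (121/36 : ℝ))
    convert (show HasDerivAt (fun x : ℝ => -(2365 / 42) * x ^ (-7 : ℝ) + 9725 / 240 * x ^ (-10 : ℝ)
        + 1925 / 144 * x ^ (-4 : ℝ) + 121 / 36 * x ^ (-1 : ℝ)) _ x from h) using 1
    norm_num
    ring
  have hint : IntegrableOn (fun r : ℝ => 2365 / 6 * r ^ (-8 : ℝ)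
      + (-9725 / 24) * r ^ (-11 : ℝ) + (-1925 / 36) * r ^ (-5 : ℝ)
      + (-121 / 36) * r ^ (-2 : ℝ)) (Set.Ioi 1) := by
    exact ((((integrableOn_Ioi_rpow_of_lt (by norm_num) one_pos).const_mul _).add
      ((integrableOn_Ioi_rpow_of_lt (by norm_num) one_pos).const_mul _)).add
      ((integrableOn_Ioi_rpow_of_lt (by norm_num) one_pos).const_mul _)).add
      ((integrableOn_Ioi_rpow_of_lt (by norm_num) one_pos).const_mul _)
  have htend : Filter.Tendsto (fun x : ℝ => -(2365 / 42) * x ^ (-7 : ℝ)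
      + 9725 / 240 * x ^ (-10 : ℝ) + 1925 / 144 * x ^ (-4 : ℝ)
      + 121 / 36 * x ^ (-1 : ℝ)) Filter.atTop (nhds 0) := by
    have t7 := (tendsto_rpow_neg_atTop (by norm_num : (0:ℝ) < 7)).const_mul (-(2365/42) : ℝ)
    have t10 := (tendsto_rpow_neg_atTop (by norm_num : (0:ℝ) < 10)).const_mul (9725/240 : ℝ)
    have t4 := (tendsto_rpow_neg_atTop (by norm_num : (0:ℝ) < 4)).const_mul (1925/144 : ℝ)
    have t1 := (tendsto_rpow_neg_atTop (by norm_num : (0:ℝ) < 1)).const_mul (121/36 : ℝ)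
    simpa using ((t7.add t10).add t4).add t1
  rw [integral_Ioi_of_hasDerivAt_of_tendsto' hF hint htend]
  simp [Real.one_rpow]
  norm_num
end
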